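/- arXiv:2101.01966 — 2 statements merged into one kernel-verified Lean document; each statement's English description precedes it below -/
import Mathlib

section
/- Let V be an absolute matrix order unit space satisfying (T). Define on equivalence classes [p] (under ≈) of 𝒪𝒫_∞(V) the operation [p] + [q] = [p ⊕ q]. Then (𝒪𝒫_∞(V)/≈, +) is a well-defined abelian semigroup with identity [0] satisfying the cancellation law: [p] + [r] = [q] + [r] implies [p] = [q]. -/
noncomputable section

open scoped Matrix.Norms.L2Operator

/-! ### The *-algebra 𝔉 of ∞×∞ complex matrices with finitely many nonzero entries -/

/-- `∞ × ∞` complex matrices (indexed by `ℕ × ℕ`). -/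
abbrev FMat := ℕ → ℕ → ℂ

/-- The matrix has (at most) finitely many nonzero entries: it is supported in some
`n × n` top-left block. -/
def IsFin (a : FMat) : Prop := ∃ n, ∀ i j, (n ≤ i ∨ n ≤ j) → a i j = 0

/-- Matrix multiplication in `𝔉` (the `tsum` is a finite sum for finitely supported
matrices). -/
def fmul (a b : FMat) : FMat := fun i k => ∑' j, a i j * b j k

/-- The involution (conjugate transpose) on `𝔉`. -/
def fstar (a : FMat) : FMat := fun i j => starRingEnd ℂ (a j i)

/-- The matrix unit `𝔢_{i,j}`. -/
def eUnit (i j : ℕ) : FMat := fun k l => if k = i ∧ l = j then 1 else 0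

/-- `𝔍ₙ = Σ_{i<n} 𝔢_{i,i}`, the partial identities. -/
def JMat (n : ℕ) : FMat := fun k l => if k = l ∧ k < n then 1 else 0

/-- `𝔎ₙ = Σ_{i<n} 𝔢_{i,n+i}`, used for `2×2`-block constructions. -/
def KMat (n : ℕ) : FMat := fun k l => if l = k + n ∧ k < n then 1 else 0

/-- The diagonal idempotent `Σ_{i ∈ s} 𝔢_{i,i}` associated to a finite set `s ⊂ ℕ`. -/
def finsetDiag (s : Finset ℕ) : FMat := fun k l => if k = l ∧ k ∈ s then 1 else 0

/-- The operator norm on `𝔉`: the supremum of the (C*-algebra) operator norms of the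
finite top-left blocks (for a finitely supported matrix the blocks stabilize). -/
def fnorm (a : FMat) : ℝ :=
  ⨆ n : ℕ, ‖(Matrix.of fun i j : Fin n => a i j : Matrix (Fin n) (Fin n) ℂ)‖

/-- The order `o(𝔞)` of a finitely supported matrix: the least `n` such that `𝔞` is
supported in the top-left `n × n` block. -/
def matOrd (a : FMat) : ℕ := sInf {n | ∀ i j, (n ≤ i ∨ n ≤ j) → a i j = 0}

/-- A local unitary in `𝔉`: `𝔞*𝔞 = 𝔍_{o(𝔞)} = 𝔞𝔞*`. -/
def IsLocalUnitary (a : FMat) : Prop :=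
  IsFin a ∧ fmul (fstar a) a = JMat (matOrd a) ∧ fmul a (fstar a) = JMat (matOrd a)

/-! ### Non-degenerate *-𝔉-bimodules -/

/-- A non-degenerate `*`-`𝔉`-bimodule structure on a complex vector space `V`:
left and right actions of (finitely supported) infinite matrices together with an
involution, compatible with each other and with the complex scalars, such that every
element is `𝔍ₙ·v·𝔍ₙ` for some `n`. -/
structure FBimod (V : Type*) [AddCommGroup V] [Module ℂ V] where
  lsmul : FMat → V → V
  rsmul : V → FMat → V
  star : V → V
  lsmul_add : ∀ a u v, lsmul a (u + v) = lsmul a u + lsmul a v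
  rsmul_add : ∀ u v b, rsmul (u + v) b = rsmul u b + rsmul v b
  add_lsmul : ∀ a b v, IsFin a → IsFin b → lsmul (a + b) v = lsmul a v + lsmul b v
  rsmul_add' : ∀ v a b, IsFin a → IsFin b → rsmul v (a + b) = rsmul v a + rsmul v b
  smul_lsmul : ∀ (c : ℂ) a v, IsFin a → lsmul (c • a) v = c • lsmul a v
  smul_rsmul : ∀ (c : ℂ) v a, IsFin a → rsmul v (c • a) = c • rsmul v a
  mul_lsmul : ∀ a b v, IsFin a → IsFin b → lsmul (fmul a b) v = lsmul a (lsmul b v)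
  rsmul_mul : ∀ v a b, IsFin a → IsFin b → rsmul v (fmul a b) = rsmul (rsmul v a) b
  lsmul_rsmul : ∀ a v b, IsFin a → IsFin b → rsmul (lsmul a v) b = lsmul a (rsmul v b)
  star_add : ∀ u v, star (u + v) = star u + star v
  star_star : ∀ v, star (star v) = v
  star_lsmul : ∀ a v, IsFin a → star (lsmul a v) = rsmul (star v) (fstar a)
  star_rsmul : ∀ v a, IsFin a → star (rsmul v a) = lsmul (fstar a) (star v)
  smul_compat : ∀ (c : ℂ) (n : ℕ) v, lsmul (JMat n) (rsmul v (JMat n)) = v →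
    lsmul (c • JMat n) v = c • v
  nondeg : ∀ v, ∃ n, lsmul (JMat n) (rsmul v (JMat n)) = v

namespace FBimod

variable {V : Type*} [AddCommGroup V] [Module ℂ V] (M : FBimod V)

/-- `𝔍ₙ 𝔳 𝔍ₙ`. -/
def cut (n : ℕ) (v : V) : V := M.lsmul (JMat n) (M.rsmul v (JMat n))

/-- The order `o(𝔳)`: the smallest `n` with `𝔍ₙ 𝔳 𝔍ₙ = 𝔳`. -/
def ord (v : V) : ℕ := sInf {n | M.cut n v = v}

/-- `𝔞* 𝔳 𝔞`. -/
def conj (a : FMat) (v : V) : V := M.lsmul (fstar a) (M.rsmul v a)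

/-- `C` is a bimodule cone: consists of self-adjoint elements, is closed under
addition and under `𝔳 ↦ 𝔞*𝔳𝔞` for `𝔞 ∈ 𝔉`. -/
def IsCone (C : Set V) : Prop :=
  (∀ v ∈ C, M.star v = v) ∧ (∀ u ∈ C, ∀ v ∈ C, u + v ∈ C) ∧
    (∀ v ∈ C, ∀ a : FMat, IsFin a → M.conj a v ∈ C)

/-- The cone `C` is proper: `C ∩ (−C) = {0}`. -/
def ConeProper (C : Set V) : Prop := ∀ v ∈ C, -v ∈ C → v = 0

/-- The cone `C` is Archimedean. -/
def ConeArch (C : Set V) : Prop :=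
  ∀ u ∈ C, ∀ v : V, M.star v = v → (∀ k : ℝ, 0 < k → (k : ℂ) • u + v ∈ C) → v ∈ C

/-- The cone `C` is generating. -/
def ConeGen (C : Set V) : Prop :=
  ∀ v : V, ∃ v₀ ∈ C, ∃ v₁ ∈ C, ∃ v₂ ∈ C, ∃ v₃ ∈ C,
    v = v₀ + Complex.I • v₁ - v₂ - Complex.I • v₃

/-- `(𝔳₁, 𝔳₂)ₙ⁺ = 𝔳₁ + 𝔎ₙ* 𝔳₂ 𝔎ₙ` (the diagonal `2×2`-block `diag(𝔳₁,𝔳₂)`). -/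
def pairPlus (n : ℕ) (v₁ v₂ : V) : V :=
  v₁ + M.lsmul (fstar (KMat n)) (M.rsmul v₂ (KMat n))

/-- `saₙ(𝔳) = 𝔍ₙ 𝔳 𝔎ₙ + 𝔎ₙ* 𝔳* 𝔍ₙ` (the off-diagonal `2×2`-block of `𝔳`). -/
def san (n : ℕ) (v : V) : V :=
  M.lsmul (JMat n) (M.rsmul v (KMat n)) +
    M.lsmul (fstar (KMat n)) (M.rsmul (M.star v) (JMat n))

/-- `𝔲` and `𝔳` are `𝔉`-independent: compressed onto disjoint diagonal blocks. -/
def FIndep (u v : V) : Prop :=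
  ∃ I J : Finset ℕ, Disjoint I J ∧
    M.lsmul (finsetDiag I) (M.rsmul u (finsetDiag I)) = u ∧
    M.lsmul (finsetDiag J) (M.rsmul v (finsetDiag J)) = v

/-- `(𝔙, C, abs)` is a non-degenerate absolutely ordered `𝔉`-bimodule
(Definition 18 of the paper). -/
structure IsAbsOrd (C : Set V) (abs : V → V) : Prop where
  cone : M.IsCone C
  abs_mem : ∀ v, abs v ∈ C
  ord_abs_le : ∀ v, M.ord (abs v) ≤ M.ord v
  abs_of_mem : ∀ v ∈ C, abs v = v
  pos_part : ∀ v, M.pairPlus (M.ord v) (abs (M.star v)) (abs v) + M.san (M.ord v) v ∈ C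
  abs_smul_le : ∀ (a b : FMat), IsFin a → IsFin b → ∀ v,
    (fnorm a : ℂ) • abs (M.rsmul (abs v) b) - abs (M.lsmul a (M.rsmul v b)) ∈ C
  indep_add : ∀ u v, M.FIndep u v → abs (u + v) = abs u + abs v
  absorb : ∀ u ∈ C, ∀ v ∈ C, ∀ w ∈ C, abs (u - v) = u + v → v - w ∈ C →
    abs (u - w) = u + w
  ortho_pm : ∀ u ∈ C, ∀ v ∈ C, ∀ w ∈ C, abs (u - v) = u + v → abs (u - w) = u + w →
    abs (u - abs (v + w)) = u + abs (v + w) ∧ abs (u - abs (v - w)) = u + abs (v - w)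

/-- `eⁿ = Σ_{i<n} 𝔢_{i,0} 𝔢 𝔢_{0,i}` for an element `𝔢` of order `1`. -/
def epow (e : V) (n : ℕ) : V :=
  ∑ i ∈ Finset.range n, M.lsmul (eUnit i 0) (M.rsmul e (eUnit 0 i))

/-- `𝔢` is a local order unit for `(𝔙, C)`. -/
def IsLocalOrderUnit (C : Set V) (e : V) : Prop :=
  e ∈ C ∧ M.cut 1 e = e ∧ ∀ v : V, M.cut 1 v = v → ∃ k : ℝ, 0 < k ∧
    M.pairPlus 1 ((k : ℂ) • e) ((k : ℂ) • e) + M.san 1 v ∈ C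

/-- `(𝔙, C, 𝔢)` is a local `𝔉`-order unit bimodule. -/
def IsLocalUnitBimod (C : Set V) (e : V) : Prop :=
  M.IsCone C ∧ ConeProper C ∧ M.ConeArch C ∧ M.IsLocalOrderUnit C e

/-- The norm associated to a local order unit:
`‖𝔳‖ = inf { k > 0 : (k𝔢^{o(𝔳)}, k𝔢^{o(𝔳)})⁺_{o(𝔳)} + sa_{o(𝔳)}(𝔳) ∈ C }`. -/
def lnorm (C : Set V) (e : V) (v : V) : ℝ :=
  sInf {k : ℝ | 0 < k ∧
    M.pairPlus (M.ord v) ((k : ℂ) • M.epow e (M.ord v)) ((k : ℂ) • M.epow e (M.ord v)) +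
      M.san (M.ord v) v ∈ C}

/-- `𝔲 ⊥_∞ 𝔳` with respect to the local-order-unit norm. -/
def PerpInf (C : Set V) (e : V) (u v : V) : Prop :=
  ∀ k₁ k₂ : ℝ, M.lnorm C e ((k₁ : ℂ) • u + (k₂ : ℂ) • v) =
    max (M.lnorm C e ((k₁ : ℂ) • u)) (M.lnorm C e ((k₂ : ℂ) • v))

end FBimod
/-! ### Matrices over a complex *-vector space -/

section MatrixLevel

variable {V : Type*} [AddCommGroup V] [Module ℂ V] [StarAddMonoid V] [StarModule ℂ V]

/-- Conjugate transpose of a rectangular matrix over a `*`-vector space. -/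
def mstar {m n : ℕ} (v : Matrix (Fin m) (Fin n) V) : Matrix (Fin n) (Fin m) V :=
  fun i j => star (v j i)

/-- Left action of a scalar matrix: `(a v)_{ij} = Σ_k a_{ik} v_{kj}`. -/
def aSmul {r m n : ℕ} (a : Matrix (Fin r) (Fin m) ℂ) (v : Matrix (Fin m) (Fin n) V) :
    Matrix (Fin r) (Fin n) V :=
  fun i j => ∑ k, a i k • v k j

/-- Right action of a scalar matrix: `(v b)_{ij} = Σ_k b_{kj} • v_{ik}`. -/
def smulB {m n s : ℕ} (v : Matrix (Fin m) (Fin n) V) (b : Matrix (Fin n) (Fin s) ℂ) :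
    Matrix (Fin m) (Fin s) V :=
  fun i j => ∑ k, b k j • v i k

/-- Direct sum (block diagonal) of rectangular matrices over `V`. -/
def dsum {m n r s : ℕ} (v : Matrix (Fin m) (Fin n) V) (w : Matrix (Fin r) (Fin s) V) :
    Matrix (Fin (m + r)) (Fin (n + s)) V :=
  fun i j =>
    if hi : (i : ℕ) < m then
      (if hj : (j : ℕ) < n then v ⟨i, hi⟩ ⟨j, hj⟩ else 0)
    else
      (if hj : (j : ℕ) < n then 0
       else w ⟨(i : ℕ) - m, by have := i.isLt; omega⟩ ⟨(j : ℕ) - n, by have := j.isLt; omega⟩)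

end MatrixLevel

/-- The L2-operator norm of a rectangular complex scalar matrix. -/
def cnorm {r m : ℕ} (a : Matrix (Fin r) (Fin m) ℂ) : ℝ := ‖a‖

/-- Embedding of a finite rectangular complex matrix into `𝔉`. -/
def embC {r m : ℕ} (a : Matrix (Fin r) (Fin m) ℂ) : FMat :=
  fun i j => if hi : i < r then (if hj : j < m then a ⟨i, hi⟩ ⟨j, hj⟩ else 0) else 0

/-- `e ⊕ ⋯ ⊕ e`: the diagonal matrix with constant diagonal `e`. -/
def diagE {V : Type*} [AddCommGroup V] (e : V) (n : ℕ) : Matrix (Fin n) (Fin n) V :=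
  Matrix.of fun i j => if i = j then e else 0

/-! ### Absolutely matrix ordered spaces and absolute matrix order unit spaces -/

/-- An absolutely matrix ordered space structure on a complex `*`-vector space `V`:
matrix cones `Mₙ(V)⁺` and absolute values `|·|_{m,n} : M_{m,n}(V) → Mₙ(V)⁺`
(Definition 4.1 of Karn-Kumar). -/
structure AMOS (V : Type*) [AddCommGroup V] [Module ℂ V] [StarAddMonoid V]
    [StarModule ℂ V] where
  pos : ∀ n : ℕ, Set (Matrix (Fin n) (Fin n) V)
  abs : ∀ m n : ℕ, Matrix (Fin m) (Fin n) V → Matrix (Fin n) (Fin n) V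
  pos_star : ∀ n, ∀ v ∈ pos n, mstar v = v
  pos_add : ∀ n, ∀ u ∈ pos n, ∀ v ∈ pos n, u + v ∈ pos n
  pos_conj : ∀ m n (a : Matrix (Fin n) (Fin m) ℂ), ∀ v ∈ pos n,
    aSmul a.conjTranspose (smulB v a) ∈ pos m
  abs_mem : ∀ m n v, abs m n v ∈ pos n
  abs_of_pos : ∀ n, ∀ v ∈ pos n, abs n n v = v
  abs_add_self : ∀ n (v : Matrix (Fin n) (Fin n) V), mstar v = v →
    abs n n v + v ∈ pos n ∧ abs n n v - v ∈ pos n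
  abs_real_smul : ∀ n (k : ℝ) (v : Matrix (Fin n) (Fin n) V), mstar v = v →
    abs n n ((k : ℂ) • v) = ((|k| : ℝ) : ℂ) • abs n n v
  absorb : ∀ n, ∀ u ∈ pos n, ∀ v ∈ pos n, ∀ w ∈ pos n,
    abs n n (u - v) = u + v → v - w ∈ pos n → abs n n (u - w) = u + w
  ortho_pm : ∀ n, ∀ u ∈ pos n, ∀ v ∈ pos n, ∀ w ∈ pos n,
    abs n n (u - v) = u + v → abs n n (u - w) = u + w →
    abs n n (u - abs n n (v + w)) = u + abs n n (v + w) ∧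
      abs n n (u - abs n n (v - w)) = u + abs n n (v - w)
  abs_smul_le : ∀ (r m n s : ℕ) (α : Matrix (Fin r) (Fin m) ℂ)
    (v : Matrix (Fin m) (Fin n) V) (β : Matrix (Fin n) (Fin s) ℂ),
    (cnorm α : ℂ) • abs n s (smulB (abs m n v) β) - abs r s (aSmul α (smulB v β)) ∈ pos s
  abs_dsum : ∀ (m n r s : ℕ) (v : Matrix (Fin m) (Fin n) V) (w : Matrix (Fin r) (Fin s) V),
    abs (m + r) (n + s) (dsum v w) = dsum (abs m n v) (abs r s w)

/-- A matrix order unit structure on top of an absolutely matrix ordered space: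
an order unit `e` with `V⁺` proper and each `Mₙ(V)⁺` Archimedean. -/
structure AMOUS (V : Type*) [AddCommGroup V] [Module ℂ V] [StarAddMonoid V]
    [StarModule ℂ V] extends AMOS V where
  e : V
  e_pos : diagE e 1 ∈ pos 1
  proper : ∀ v ∈ pos 1, -v ∈ pos 1 → v = 0
  arch : ∀ n (v : Matrix (Fin n) (Fin n) V), mstar v = v →
    (∀ k : ℝ, 0 < k → (k : ℂ) • diagE e n + v ∈ pos n) →
    v ∈ pos n
  unit : ∀ n (v : Matrix (Fin n) (Fin n) V), mstar v = v →
    ∃ k : ℝ, 0 < k ∧ (k : ℂ) • diagE e n - v ∈ pos n ∧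
      (k : ℂ) • diagE e n + v ∈ pos n

namespace AMOUS

variable {V : Type*} [AddCommGroup V] [Module ℂ V] [StarAddMonoid V] [StarModule ℂ V]
variable (A : AMOUS V)

/-- `eⁿ = e ⊕ ⋯ ⊕ e ∈ Mₙ(V)`. -/
def eN (n : ℕ) : Matrix (Fin n) (Fin n) V := diagE A.e n

/-- The `2n × 2n` matrix `[[a, b], [c, d]]` of `n × n` blocks. -/
def block2 {n : ℕ} (a b c d : Matrix (Fin n) (Fin n) V) :
    Matrix (Fin (n + n)) (Fin (n + n)) V :=
  fun i j =>
    if hi : (i : ℕ) < n then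
      (if hj : (j : ℕ) < n then a ⟨i, hi⟩ ⟨j, hj⟩
       else b ⟨i, hi⟩ ⟨(j : ℕ) - n, by have := j.isLt; omega⟩)
    else
      (if hj : (j : ℕ) < n then c ⟨(i : ℕ) - n, by have := i.isLt; omega⟩ ⟨j, hj⟩
       else d ⟨(i : ℕ) - n, by have := i.isLt; omega⟩ ⟨(j : ℕ) - n, by have := j.isLt; omega⟩)

end AMOUS
namespace AMOUS

variable {V : Type*} [AddCommGroup V] [Module ℂ V] [StarAddMonoid V] [StarModule ℂ V]
variable (A : AMOUS V)

/-- The matrix norms of a matrix order unit space: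
`‖v‖ₙ = inf { k > 0 : [[k eⁿ, v], [v*, k eⁿ]] ∈ M₂ₙ(V)⁺ }`. -/
def mnorm (n : ℕ) (v : Matrix (Fin n) (Fin n) V) : ℝ :=
  sInf {k : ℝ | 0 < k ∧
    block2 ((k : ℂ) • A.eN n) v (mstar v) ((k : ℂ) • A.eN n) ∈ A.pos (n + n)}

/-- Orthogonality `u ⊥ v` (for positive elements): `|u − v| = u + v`. -/
def Perp {n : ℕ} (u v : Matrix (Fin n) (Fin n) V) : Prop :=
  A.abs n n (u - v) = u + v

/-- `u ⊥_∞ v`: `‖k₁ u + k₂ v‖ = max {‖k₁ u‖, ‖k₂ v‖}` for all real `k₁, k₂`. -/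
def PerpInfM {n : ℕ} (u v : Matrix (Fin n) (Fin n) V) : Prop :=
  ∀ k₁ k₂ : ℝ, A.mnorm n ((k₁ : ℂ) • u + (k₂ : ℂ) • v) =
    max (A.mnorm n ((k₁ : ℂ) • u)) (A.mnorm n ((k₂ : ℂ) • v))

/-- `u ⊥_∞^a v`: absolute `∞`-orthogonality. -/
def PerpInfA {n : ℕ} (u v : Matrix (Fin n) (Fin n) V) : Prop :=
  ∀ u₁ ∈ A.pos n, ∀ v₁ ∈ A.pos n, u - u₁ ∈ A.pos n → v - v₁ ∈ A.pos n → A.PerpInfM u₁ v₁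

/-- `(V, {Mₙ(V)⁺}, {|·|}, e)` is an absolute matrix order unit space:
`⊥ = ⊥_∞^a` on each `Mₙ(V)⁺`. -/
def IsAbsolute : Prop :=
  ∀ n, ∀ u ∈ A.pos n, ∀ v ∈ A.pos n, (A.Perp u v ↔ A.PerpInfA u v)

/-- `p` is an order projection in `Mₙ(V)`: `p* = p` and `|2p − eⁿ| = eⁿ`. -/
def IsOP (n : ℕ) (p : Matrix (Fin n) (Fin n) V) : Prop :=
  mstar p = p ∧ A.abs n n ((2 : ℂ) • p - A.eN n) = A.eN n

/-- `v ∈ M_{m,n}(V)` is a partial isometry: `|v|` and `|v*|` are order projections. -/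
def IsPI {m n : ℕ} (v : Matrix (Fin m) (Fin n) V) : Prop :=
  A.IsOP n (A.abs m n v) ∧ A.IsOP m (A.abs n m (mstar v))

end AMOUS

/-- An element of `M_∞(V)`: a matrix at some level `n`. -/
def OPE (V : Type*) : Type _ := Σ n : ℕ, Matrix (Fin n) (Fin n) V

namespace OPE

variable {V : Type*} [AddCommGroup V] [Module ℂ V] [StarAddMonoid V] [StarModule ℂ V]

/-- Direct sum in `M_∞(V)`. -/
def d (p q : OPE V) : OPE V := ⟨p.1 + q.1, dsum p.2 q.2⟩

/-- The zero order projection (at level 1). -/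
def zero (V : Type*) [AddCommGroup V] : OPE V := ⟨1, 0⟩

end OPE

namespace AMOUS

variable {V : Type*} [AddCommGroup V] [Module ℂ V] [StarAddMonoid V] [StarModule ℂ V]
variable (A : AMOUS V)

/-- Membership in `𝒪𝒫_∞(V)`. -/
def IsOPE (p : OPE V) : Prop := A.IsOP p.1 p.2

/-- `eⁿ` as an element of `𝒪𝒫_∞(V)`. -/
def eOPE (n : ℕ) : OPE V := ⟨n, A.eN n⟩

/-- Partial isometric equivalence `p ∼ q` of order projections: there is a partial
isometry `v` with `p = |v*|` and `q = |v|`. -/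
def Sim (p q : OPE V) : Prop :=
  ∃ v : Matrix (Fin p.1) (Fin q.1) V,
    A.IsPI v ∧ p.2 = A.abs q.1 p.1 (mstar v) ∧ q.2 = A.abs p.1 q.1 v

/-- Condition (T). -/
def CondT : Prop :=
  ∀ (m n l : ℕ) (u : Matrix (Fin m) (Fin n) V) (v : Matrix (Fin l) (Fin n) V),
    A.IsPI u → A.IsPI v → A.abs m n u = A.abs l n v →
    ∃ w : Matrix (Fin m) (Fin l) V, A.IsPI w ∧
      A.abs l m (mstar w) = A.abs n m (mstar u) ∧ A.abs m l w = A.abs n l (mstar v)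

/-- Stabilized equivalence `p ≈ q`: `p ⊕ r ∼ q ⊕ r` for some order projection `r`. -/
def ASim (p q : OPE V) : Prop := ∃ r : OPE V, A.IsOPE r ∧ A.Sim (p.d r) (q.d r)

/-- A pair of order projections, representing an element `[(p,q)]` of `K₀(V)`. -/
def IsOPPair (x : OPE V × OPE V) : Prop := A.IsOPE x.1 ∧ A.IsOPE x.2

/-- The relation `(p₁,q₁) ≡ (p₂,q₂) ↔ p₁ ⊕ q₂ ≈ p₂ ⊕ q₁` defining `K₀(V)`. -/
def Krel (x y : OPE V × OPE V) : Prop := A.ASim (x.1.d y.2) (y.1.d x.2)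

/-- Addition of representatives of `K₀(V)` classes. -/
def kadd (x y : OPE V × OPE V) : OPE V × OPE V := (x.1.d y.1, x.2.d y.2)

/-- The representative of the zero class of `K₀(V)`. -/
def kzero : OPE V × OPE V := (OPE.zero V, OPE.zero V)

/-- Representative-level membership in the cone `K₀(V)⁺ = {[(p,0)] : p ∈ 𝒪𝒫_∞(V)}`. -/
def KPos (x : OPE V × OPE V) : Prop :=
  ∃ p : OPE V, A.IsOPE p ∧ A.Krel x (p, OPE.zero V)

/-- Representative-level order `[x] ≤ [y]` in `K₀(V)`: `[y] − [x] ∈ K₀(V)⁺`. -/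
def Kle (x y : OPE V × OPE V) : Prop :=
  ∃ r : OPE V, A.IsOPE r ∧ A.Krel (kadd x (r, OPE.zero V)) y

/-- The order projection `p ∈ Mₙ(V)` is finite: `q ∼ p` and `q ≥ p` imply `q = p`. -/
def FiniteOP (n : ℕ) (p : Matrix (Fin n) (Fin n) V) : Prop :=
  ∀ q : Matrix (Fin n) (Fin n) V, A.IsOP n q → A.Sim ⟨n, q⟩ ⟨n, p⟩ →
    q - p ∈ A.pos n → q = p

end AMOUS

/-! ### Maps between absolute matrix order unit spaces -/

section Maps

variable {V W : Type*} [AddCommGroup V] [Module ℂ V] [StarAddMonoid V] [StarModule ℂ V]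
  [AddCommGroup W] [Module ℂ W] [StarAddMonoid W] [StarModule ℂ W]

/-- The amplification `φₙ` (entrywise application) of a map. -/
def mmap (φ : V →ₗ[ℂ] W) {m n : ℕ} (v : Matrix (Fin m) (Fin n) V) :
    Matrix (Fin m) (Fin n) W :=
  fun i j => φ (v i j)

/-- `φ` is completely `|·|`-preserving: every amplification `φₙ` is `|·|`-preserving. -/
def CAbsPres (A : AMOUS V) (B : AMOUS W) (φ : V →ₗ[ℂ] W) : Prop :=
  ∀ (n : ℕ) (v : Matrix (Fin n) (Fin n) V), B.abs n n (mmap φ v) = mmap φ (A.abs n n v)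

/-- `φ` and `ψ` are completely orthogonal: `φₙ(u) ⊥ ψₙ(v)` for all positive `u, v`. -/
def COrth (A : AMOUS V) (B : AMOUS W) (φ ψ : V →ₗ[ℂ] W) : Prop :=
  ∀ (n : ℕ) (u v : Matrix (Fin n) (Fin n) V), u ∈ A.pos n → v ∈ A.pos n →
    B.Perp (mmap φ u) (mmap ψ v)

/-- The image of an element of `M_∞(V)` under (the amplifications of) `φ`. -/
def mmapOPE (φ : V →ₗ[ℂ] W) (p : OPE V) : OPE W := ⟨p.1, mmap φ p.2⟩

/-- `F` represents a group homomorphism `K₀(V) → K₀(W)` making the `K₀` diagram of `φ`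
commute: it maps `K₀`-representatives to `K₀`-representatives, respects the defining
relation `≡`, is additive, and satisfies `F([(p, 0)]) = [(φ(p), 0)]`. -/
def K0HomProp (A : AMOUS V) (B : AMOUS W) (φ : V →ₗ[ℂ] W)
    (F : OPE V × OPE V → OPE W × OPE W) : Prop :=
  (∀ x, A.IsOPPair x → B.IsOPPair (F x)) ∧
  (∀ x y, A.IsOPPair x → A.IsOPPair y → A.Krel x y → B.Krel (F x) (F y)) ∧
  (∀ x y, A.IsOPPair x → A.IsOPPair y → B.Krel (F (AMOUS.kadd x y)) (AMOUS.kadd (F x) (F y))) ∧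
  (∀ p : OPE V, A.IsOPE p → B.Krel (F (p, OPE.zero V)) (mmapOPE φ p, OPE.zero W))

/-- The completely bounded norm of `φ` with respect to the order unit matrix norms. -/
def cbNorm (A : AMOUS V) (B : AMOUS W) (φ : V →ₗ[ℂ] W) : ℝ :=
  ⨆ n : ℕ, sInf {c : ℝ | 0 ≤ c ∧
    ∀ v : Matrix (Fin n) (Fin n) V, B.mnorm n (mmap φ v) ≤ c * A.mnorm n v}

end Maps


/-! ### Auxiliary development for Statement 13 -/

section Statement13Aux

variable {V : Type*} [AddCommGroup V] [Module ℂ V] [StarAddMonoid V] [StarModule ℂ V]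

lemma s13_mk_congr {X : Type*} {m n : ℕ} (w : Matrix (Fin m) (Fin n) X) {x x' y y' : ℕ}
    {hx : x < m} {hx' : x' < m} {hy : y < n} {hy' : y' < n}
    (h1 : x = x') (h2 : y = y') : w ⟨x, hx⟩ ⟨y, hy⟩ = w ⟨x', hx'⟩ ⟨y', hy'⟩ := by
  subst h1; subst h2; rfl

lemma s13_smulB_one {m n : ℕ} (v : Matrix (Fin m) (Fin n) V) :
    smulB v (1 : Matrix (Fin n) (Fin n) ℂ) = v := by
  funext i j
  simp [smulB, Matrix.one_apply, ite_smul]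

lemma s13_aSmul_one {m n : ℕ} (v : Matrix (Fin m) (Fin n) V) :
    aSmul (1 : Matrix (Fin m) (Fin m) ℂ) v = v := by
  funext i j
  simp [aSmul, Matrix.one_apply, ite_smul]

lemma s13_aSmul_aSmul {r m l n : ℕ} (a : Matrix (Fin r) (Fin m) ℂ) (b : Matrix (Fin m) (Fin l) ℂ)
    (v : Matrix (Fin l) (Fin n) V) : aSmul a (aSmul b v) = aSmul (a * b) v := by
  funext i j
  simp only [aSmul, Matrix.mul_apply, Finset.smul_sum, smul_smul, Finset.sum_smul]
  exact Finset.sum_comm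

lemma s13_smulB_neg {m n s : ℕ} (v : Matrix (Fin m) (Fin n) V) (b : Matrix (Fin n) (Fin s) ℂ) :
    smulB (-v) b = -(smulB v b) := by
  funext i j; simp [smulB]

lemma s13_aSmul_neg {r m n : ℕ} (a : Matrix (Fin r) (Fin m) ℂ) (v : Matrix (Fin m) (Fin n) V) :
    aSmul a (-v) = -(aSmul a v) := by
  funext i j; simp [aSmul]

lemma s13_mstar_mstar {m n : ℕ} (v : Matrix (Fin m) (Fin n) V) : mstar (mstar v) = v := by
  funext i j; simp [mstar]

lemma s13_mstar_smul {m n : ℕ} (c : ℂ) (v : Matrix (Fin m) (Fin n) V) :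
    mstar (c • v) = star c • mstar v := by
  funext i j; simp [mstar, star_smul]

lemma s13_mstar_sub {m n : ℕ} (u v : Matrix (Fin m) (Fin n) V) :
    mstar (u - v) = mstar u - mstar v := by
  funext i j; simp [mstar]

lemma s13_mstar_zero {m n : ℕ} : mstar (0 : Matrix (Fin m) (Fin n) V) = 0 := by
  funext i j; simp [mstar]

lemma s13_one_smul_aSmul {m n : ℕ} (c : ℂ) (v : Matrix (Fin m) (Fin n) V) :
    aSmul (c • (1 : Matrix (Fin m) (Fin m) ℂ)) v = c • v := by
  funext i j
  simp [aSmul, Matrix.one_apply, mul_ite, ite_smul, smul_smul]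

lemma s13_smulB_one_smul {m n : ℕ} (c : ℂ) (v : Matrix (Fin m) (Fin n) V) :
    smulB v (c • (1 : Matrix (Fin n) (Fin n) ℂ)) = c • v := by
  funext i j
  simp [smulB, Matrix.one_apply, mul_ite, ite_smul, smul_smul]

lemma s13_mstar_dsum {m n r s : ℕ} (v : Matrix (Fin m) (Fin n) V) (w : Matrix (Fin r) (Fin s) V) :
    mstar (dsum v w) = dsum (mstar v) (mstar w) := by
  funext i j
  simp only [mstar, dsum]
  split_ifs <;> simp [mstar]

lemma s13_dsum_sub {m n r s : ℕ} (a b : Matrix (Fin m) (Fin n) V) (c d : Matrix (Fin r) (Fin s) V) :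
    dsum (a - b) (c - d) = dsum a c - dsum b d := by
  funext i j
  simp only [dsum, Matrix.sub_apply]
  split_ifs <;> simp

lemma s13_dsum_smul {m n r s : ℕ} (c : ℂ) (a : Matrix (Fin m) (Fin n) V)
    (b : Matrix (Fin r) (Fin s) V) : dsum (c • a) (c • b) = c • dsum a b := by
  funext i j
  simp only [dsum, Matrix.smul_apply]
  split_ifs <;> simp

lemma s13_dsum_nil {m n : ℕ} (x : Matrix (Fin m) (Fin n) V) (y : Matrix (Fin 0) (Fin 0) V) :
    dsum x y = x := by
  funext i j
  have hi : (i : ℕ) < m := by have := i.isLt; omega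
  have hj : (j : ℕ) < n := by have := j.isLt; omega
  simp only [dsum]
  rw [dif_pos hi, dif_pos hj]
  exact s13_mk_congr x rfl rfl

/-- The norm of an isometry is at most `1`. -/
lemma s13_cnorm_le_one {r m : ℕ} {α : Matrix (Fin r) (Fin m) ℂ}
    (h : α.conjTranspose * α = 1) : cnorm α ≤ 1 := by
  have h1 : ‖(1 : Matrix (Fin m) (Fin m) ℂ)‖ ≤ 1 := by
    have h2 := Matrix.l2_opNorm_conjTranspose_mul_self (1 : Matrix (Fin m) (Fin m) ℂ)
    rw [Matrix.conjTranspose_one, one_mul] at h2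
    nlinarith [norm_nonneg (1 : Matrix (Fin m) (Fin m) ℂ)]
  have h2 := Matrix.l2_opNorm_conjTranspose_mul_self α
  rw [h] at h2
  show ‖α‖ ≤ 1
  nlinarith [norm_nonneg α]

/-- Permutation-type scalar matrix associated to an equivalence of index sets. -/
def permE {a b : ℕ} (σ : Fin a ≃ Fin b) : Matrix (Fin b) (Fin a) ℂ :=
  fun i j => if σ j = i then 1 else 0

lemma permE_conj_mul {a b : ℕ} (σ : Fin a ≃ Fin b) :
    (permE σ).conjTranspose * permE σ = 1 := by
  funext j k
  simp only [Matrix.mul_apply, Matrix.conjTranspose_apply, permE, Matrix.one_apply]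
  rw [Finset.sum_eq_single (σ j)]
  · rcases eq_or_ne j k with rfl | h
    · simp
    · simp [h, (Equiv.injective σ).ne (Ne.symm h)]
  · intro i _ hi
    rw [if_neg (fun hh => hi hh.symm)]
    simp
  · intro h; exact absurd (Finset.mem_univ _) h

lemma aSmul_permE_apply {a b n : ℕ} (σ : Fin a ≃ Fin b) (w : Matrix (Fin a) (Fin n) V)
    (i : Fin b) (j : Fin n) : aSmul (permE σ) w i j = w (σ.symm i) j := by
  simp only [aSmul, permE]
  rw [Finset.sum_eq_single (σ.symm i)]
  · simp
  · intro k _ hk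
    rw [if_neg, zero_smul]
    intro h; apply hk; rw [← h, Equiv.symm_apply_apply]
  · intro h; exact absurd (Finset.mem_univ _) h

/-- The block-swap equivalence. -/
def swapEquiv (m n : ℕ) : Fin (m + n) ≃ Fin (n + m) where
  toFun i := ⟨if (i : ℕ) < m then (i : ℕ) + n else (i : ℕ) - m, by
    rcases i with ⟨i, hi⟩; dsimp only; split <;> omega⟩
  invFun j := ⟨if (j : ℕ) < n then (j : ℕ) + m else (j : ℕ) - n, by
    rcases j with ⟨j, hj⟩; dsimp only; split <;> omega⟩
  left_inv i := by
    rcases i with ⟨i, hi⟩; apply Fin.ext; dsimp only; split_ifs <;> omega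
  right_inv j := by
    rcases j with ⟨j, hj⟩; apply Fin.ext; dsimp only; split_ifs <;> omega

lemma swapEquiv_val (m n : ℕ) (i : Fin (m + n)) :
    ((swapEquiv m n i : Fin (n + m)) : ℕ) = if (i : ℕ) < m then (i : ℕ) + n else (i : ℕ) - m :=
  rfl

namespace AMOUS

variable (A : AMOUS V)

lemma abs_abs' (m n : ℕ) (v : Matrix (Fin m) (Fin n) V) :
    A.abs n n (A.abs m n v) = A.abs m n v :=
  A.abs_of_pos n _ (A.abs_mem m n v)

lemma zero_mem_pos (n : ℕ) : (0 : Matrix (Fin n) (Fin n) V) ∈ A.pos n := by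
  have hm : mstar (0 : Matrix (Fin n) (Fin n) V) = 0 := s13_mstar_zero
  have h0 := A.abs_real_smul n 0 0 hm
  simp only [Complex.ofReal_zero, zero_smul, smul_zero, abs_zero] at h0
  have := A.abs_mem n n (0 : Matrix (Fin n) (Fin n) V)
  rwa [h0] at this

lemma smul_mem_pos {n : ℕ} (t : ℝ) (ht : 0 ≤ t) {v : Matrix (Fin n) (Fin n) V}
    (hv : v ∈ A.pos n) : ((t : ℝ) : ℂ) • v ∈ A.pos n := by
  have h := A.pos_conj n n (((Real.sqrt t : ℝ) : ℂ) • (1 : Matrix (Fin n) (Fin n) ℂ)) v hv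
  rw [s13_smulB_one_smul] at h
  rw [show (((Real.sqrt t : ℝ) : ℂ) • (1 : Matrix (Fin n) (Fin n) ℂ)).conjTranspose
      = ((Real.sqrt t : ℝ) : ℂ) • (1 : Matrix (Fin n) (Fin n) ℂ) by
    simp [Matrix.conjTranspose_smul, Complex.conj_ofReal]] at h
  rw [s13_one_smul_aSmul, smul_smul, ← Complex.ofReal_mul, Real.mul_self_sqrt ht] at h
  exact h

/-- Properness of the cone at every matrix level. -/
lemma proper_pos {n : ℕ} {v : Matrix (Fin n) (Fin n) V}
    (h1 : v ∈ A.pos n) (h2 : -v ∈ A.pos n) : v = 0 := by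
  have key : ∀ a : Fin n → ℂ, (∑ i, star (a i) • ∑ k, a k • v i k) = 0 := by
    intro a
    set Amat : Matrix (Fin n) (Fin 1) ℂ := fun k _ => a k with hA
    have hp := A.pos_conj 1 n Amat v h1
    have hq := A.pos_conj 1 n Amat (-v) h2
    rw [s13_smulB_neg, s13_aSmul_neg] at hq
    have hz := A.proper _ hp hq
    have hzz := congrFun (congrFun hz 0) 0
    simpa [aSmul, smulB, Matrix.conjTranspose_apply, Matrix.conjTranspose, Matrix.transpose, Matrix.map, hA] using hzz
  have diag : ∀ i : Fin n, v i i = 0 := by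
    intro i
    have h := key (fun k => if k = i then (1 : ℂ) else 0)
    simpa [apply_ite (star : ℂ → ℂ), ite_smul, Finset.sum_ite_eq'] using h
  funext i j
  show v i j = 0
  rcases eq_or_ne i j with rfl | hij
  · exact diag i
  have hsum : ∀ c : ℂ, c • v i j + star c • v j i = 0 := by
    intro c
    have h0 := key (fun k => if k = i then (1 : ℂ) else if k = j then c else 0)
    have e1 : ∀ i' : Fin n, (∑ k, (if k = i then (1 : ℂ) else if k = j then c else 0) • v i' k)
        = v i' i + c • v i' j := by
      intro i'
      have hterm : ∀ k : Fin n, (if k = i then (1 : ℂ) else if k = j then c else 0) • v i' k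
          = (if k = i then v i' k else 0) + (if k = j then c • v i' k else 0) := by
        intro k
        rcases eq_or_ne k i with rfl | hki
        · simp [hij]
        · rcases eq_or_ne k j with rfl | hkj
          · simp [hki]
          · simp [hki, hkj]
      rw [Finset.sum_congr rfl (fun k _ => hterm k), Finset.sum_add_distrib]
      simp [Finset.sum_ite_eq']
    rw [Finset.sum_congr rfl (fun i' _ => by rw [e1 i'])] at h0
    have e2 : ∀ i' : Fin n,
        star (if i' = i then (1 : ℂ) else if i' = j then c else 0) • (v i' i + c • v i' j)
        = (if i' = i then v i' i + c • v i' j else 0)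
          + (if i' = j then star c • (v i' i + c • v i' j) else 0) := by
      intro i'
      rcases eq_or_ne i' i with rfl | h1'
      · simp [hij]
      · rcases eq_or_ne i' j with rfl | h2'
        · simp [h1']
        · simp [h1', h2']
    rw [Finset.sum_congr rfl (fun i' _ => e2 i'), Finset.sum_add_distrib] at h0
    simp only [Finset.sum_ite_eq', Finset.mem_univ, if_true] at h0
    rw [diag i, diag j] at h0
    simpa [smul_add] using h0
  have e1 : v i j + v j i = 0 := by simpa using hsum 1
  have e2 : Complex.I • v i j - Complex.I • v j i = 0 := by
    simpa [Complex.star_def, Complex.conj_I, neg_smul, sub_eq_add_neg] using hsum Complex.I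
  have e3 : v i j - v j i = 0 := by
    have h4 := congrArg (fun x => (-Complex.I) • x) e2
    simpa [smul_sub, smul_smul, neg_mul, Complex.I_mul_I] using h4
  have e4 : (2 : ℂ) • v i j = 0 := by
    have habel : v i j + v i j = (v i j + v j i) + (v i j - v j i) := by abel
    rw [two_smul, habel, e1, e3, add_zero]
  have e5 := congrArg (fun x => ((2 : ℂ)⁻¹) • x) e4
  simp only [smul_smul] at e5
  rw [show ((2 : ℂ)⁻¹ * 2) = 1 by norm_num, one_smul, smul_zero] at e5
  exact e5

/-- The absolute value of a matrix with no rows is zero. -/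
lemma abs_rowEmpty (n : ℕ) (z : Matrix (Fin 0) (Fin n) V) : A.abs 0 n z = 0 := by
  have h := A.abs_smul_le 0 0 n n (0 : Matrix (Fin 0) (Fin 0) ℂ) z 1
  have hz : aSmul (0 : Matrix (Fin 0) (Fin 0) ℂ) (smulB z 1) = z := by
    funext i j; exact i.elim0
  have hc : cnorm (0 : Matrix (Fin 0) (Fin 0) ℂ) = 0 := norm_zero
  rw [hz, hc] at h
  simp only [Complex.ofReal_zero, zero_smul, zero_sub] at h
  exact A.proper_pos (A.abs_mem 0 n z) h

/-- Invariance of the absolute value under left multiplication by an isometry. -/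
lemma abs_aSmul_isometry {r m n : ℕ} (α : Matrix (Fin r) (Fin m) ℂ)
    (hα : α.conjTranspose * α = 1) (v : Matrix (Fin m) (Fin n) V) :
    A.abs r n (aSmul α v) = A.abs m n v := by
  have hn1 : cnorm α ≤ 1 := s13_cnorm_le_one hα
  have hn2 : cnorm α.conjTranspose ≤ 1 := by
    show ‖α.conjTranspose‖ ≤ 1
    rw [Matrix.l2_opNorm_conjTranspose]; exact hn1
  have d1 : A.abs m n v - A.abs r n (aSmul α v) ∈ A.pos n := by
    have h := A.abs_smul_le r m n n α v 1
    rw [s13_smulB_one, s13_smulB_one, A.abs_abs'] at h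
    have hs := A.smul_mem_pos (1 - cnorm α) (by linarith) (A.abs_mem m n v)
    have hsum := A.pos_add n _ h _ hs
    have heq : (cnorm α : ℂ) • A.abs m n v - A.abs r n (aSmul α v)
        + ((1 - cnorm α : ℝ) : ℂ) • A.abs m n v
        = A.abs m n v - A.abs r n (aSmul α v) := by
      push_cast
      module
    rwa [heq] at hsum
  have d2 : A.abs r n (aSmul α v) - A.abs m n v ∈ A.pos n := by
    have h := A.abs_smul_le m r n n α.conjTranspose (aSmul α v) 1
    rw [s13_smulB_one, s13_smulB_one, A.abs_abs', s13_aSmul_aSmul, hα, s13_aSmul_one] at h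
    have hs := A.smul_mem_pos (1 - cnorm α.conjTranspose) (by linarith)
      (A.abs_mem r n (aSmul α v))
    have hsum := A.pos_add n _ h _ hs
    have heq : (cnorm α.conjTranspose : ℂ) • A.abs r n (aSmul α v) - A.abs m n v
        + ((1 - cnorm α.conjTranspose : ℝ) : ℂ) • A.abs r n (aSmul α v)
        = A.abs r n (aSmul α v) - A.abs m n v := by
      push_cast
      module
    rwa [heq] at hsum
  have h0 := A.proper_pos d1 (by rwa [neg_sub])
  have := sub_eq_zero.mp h0
  exact this.symm

lemma star_e' : star A.e = A.e := by
  have h := A.pos_star 1 _ A.e_pos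
  have h0 := congrFun (congrFun h 0) 0
  simpa [mstar, diagE] using h0

lemma mstar_eN (n : ℕ) : mstar (A.eN n) = A.eN n := by
  funext i j
  rcases eq_or_ne i j with rfl | h
  · simp [mstar, AMOUS.eN, diagE, A.star_e']
  · simp [mstar, AMOUS.eN, diagE, h, Ne.symm h]

lemma op_pos {n : ℕ} {p : Matrix (Fin n) (Fin n) V} (hp : A.IsOP n p) : p ∈ A.pos n := by
  have hsa : mstar ((2 : ℂ) • p - A.eN n) = (2 : ℂ) • p - A.eN n := by
    rw [s13_mstar_sub, s13_mstar_smul, A.mstar_eN, hp.1]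
    norm_num
  have h2 := (A.abs_add_self n _ hsa).1
  rw [hp.2] at h2
  have h2' : (2 : ℂ) • p ∈ A.pos n := by
    have habel : A.eN n + ((2 : ℂ) • p - A.eN n) = (2 : ℂ) • p := by abel
    rwa [habel] at h2
  have h3 := A.smul_mem_pos (1/2 : ℝ) (by norm_num) h2'
  rwa [smul_smul, show (((1/2 : ℝ) : ℂ) * 2) = 1 by norm_num, one_smul] at h3

lemma eN_dsum (m n : ℕ) : dsum (A.eN m) (A.eN n) = A.eN (m + n) := by
  funext i j
  simp only [dsum, AMOUS.eN, diagE, Matrix.of_apply, Fin.ext_iff]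
  split_ifs <;> first | rfl | (exfalso; omega)
  
lemma isOP_zero : A.IsOP 1 (0 : Matrix (Fin 1) (Fin 1) V) := by
  constructor
  · exact s13_mstar_zero
  · have h1 : (2 : ℂ) • (0 : Matrix (Fin 1) (Fin 1) V) - A.eN 1 = ((-1 : ℝ) : ℂ) • A.eN 1 := by
      push_cast
      module
    rw [h1, A.abs_real_smul 1 (-1) (A.eN 1) (A.mstar_eN 1)]
    rw [A.abs_of_pos 1 (A.eN 1) A.e_pos]
    norm_num

lemma isOP_dsum {m n : ℕ} {p : Matrix (Fin m) (Fin m) V} {q : Matrix (Fin n) (Fin n) V}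
    (hp : A.IsOP m p) (hq : A.IsOP n q) : A.IsOP (m + n) (dsum p q) := by
  constructor
  · rw [s13_mstar_dsum, hp.1, hq.1]
  · have h1 : (2 : ℂ) • dsum p q - A.eN (m + n)
        = dsum ((2 : ℂ) • p - A.eN m) ((2 : ℂ) • q - A.eN n) := by
      rw [s13_dsum_sub, s13_dsum_smul, A.eN_dsum]
    rw [h1, A.abs_dsum, hp.2, hq.2, A.eN_dsum]

lemma isOPE_zero : A.IsOPE (OPE.zero V) := A.isOP_zero

lemma isOPE_d {p q : OPE V} (hp : A.IsOPE p) (hq : A.IsOPE q) : A.IsOPE (p.d q) :=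
  A.isOP_dsum hp hq

lemma isPI_mstar {m n : ℕ} {v : Matrix (Fin m) (Fin n) V} (h : A.IsPI v) :
    A.IsPI (mstar v) :=
  ⟨h.2, by rw [s13_mstar_mstar]; exact h.1⟩

lemma sim_isOPE {p q : OPE V} (h : A.Sim p q) : A.IsOPE p ∧ A.IsOPE q := by
  obtain ⟨v, hv, hp, hq⟩ := h
  exact ⟨by rw [AMOUS.IsOPE, hp]; exact hv.2, by rw [AMOUS.IsOPE, hq]; exact hv.1⟩

lemma sim_refl {p : OPE V} (hp : A.IsOPE p) : A.Sim p p := by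
  have habs : A.abs p.1 p.1 p.2 = p.2 := A.abs_of_pos _ _ (A.op_pos hp)
  have hst : mstar p.2 = p.2 := hp.1
  refine ⟨p.2, ⟨?_, ?_⟩, ?_, ?_⟩
  · rw [habs]; exact hp
  · rw [hst, habs]; exact hp
  · rw [hst, habs]
  · rw [habs]

lemma sim_symm {p q : OPE V} (h : A.Sim p q) : A.Sim q p := by
  obtain ⟨v, hv, h1, h2⟩ := h
  exact ⟨mstar v, A.isPI_mstar hv, by rw [s13_mstar_mstar]; exact h2, h1⟩

lemma sim_trans (hT : A.CondT) {p q r : OPE V} (h1 : A.Sim p q) (h2 : A.Sim q r) :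
    A.Sim p r := by
  obtain ⟨v, hv, hp, hq⟩ := h1
  obtain ⟨w, hw, hq', hr⟩ := h2
  obtain ⟨t, ht, ht1, ht2⟩ := hT p.1 q.1 r.1 v (mstar w) hv (A.isPI_mstar hw)
    (by rw [← hq, ← hq'])
  refine ⟨t, ht, ?_, ?_⟩
  · rw [ht1, ← hp]
  · rw [ht2, s13_mstar_mstar, ← hr]

lemma sim_d {p p' q q' : OPE V} (h1 : A.Sim p p') (h2 : A.Sim q q') :
    A.Sim (p.d q) (p'.d q') := by
  obtain ⟨v, hv, hp, hp'⟩ := h1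
  obtain ⟨w, hw, hq, hq'⟩ := h2
  refine ⟨dsum v w, ⟨?_, ?_⟩, ?_, ?_⟩
  · simp only [OPE.d]
    rw [A.abs_dsum]; exact A.isOP_dsum hv.1 hw.1
  · simp only [OPE.d]
    rw [s13_mstar_dsum, A.abs_dsum]; exact A.isOP_dsum hv.2 hw.2
  · show dsum p.2 q.2 = _
    simp only [OPE.d]
    rw [s13_mstar_dsum, A.abs_dsum, ← hp, ← hq]
  · show dsum p'.2 q'.2 = _
    simp only [OPE.d]
    rw [A.abs_dsum, ← hp', ← hq']

lemma sim_reindex {p q : OPE V} (hp : A.IsOPE p) (hq : A.IsOPE q)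
    (σ : Fin q.1 ≃ Fin p.1) (hσ : ∀ i j, q.2 i j = p.2 (σ i) (σ j)) : A.Sim p q := by
  have hqsa : ∀ a b, star (q.2 a b) = q.2 b a := fun a b => congrFun (congrFun hq.1 b) a
  have habsv : A.abs p.1 q.1 (aSmul (permE σ) q.2) = q.2 := by
    rw [A.abs_aSmul_isometry _ (permE_conj_mul σ), A.abs_of_pos _ _ (A.op_pos hq)]
  have hmv : mstar (aSmul (permE σ) q.2) = aSmul (permE σ.symm) p.2 := by
    funext i j
    calc star ((aSmul (permE σ) q.2) j i) = star (q.2 (σ.symm j) i) := by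
          rw [aSmul_permE_apply]
      _ = q.2 i (σ.symm j) := hqsa _ _
      _ = p.2 (σ i) (σ (σ.symm j)) := hσ _ _
      _ = p.2 (σ.symm.symm i) j := by rw [Equiv.apply_symm_apply, Equiv.symm_symm]
      _ = aSmul (permE σ.symm) p.2 i j := (aSmul_permE_apply _ _ _ _).symm
  have habsmv : A.abs q.1 p.1 (mstar (aSmul (permE σ) q.2)) = p.2 := by
    rw [hmv, A.abs_aSmul_isometry _ (permE_conj_mul σ.symm), A.abs_of_pos _ _ (A.op_pos hp)]
  refine ⟨aSmul (permE σ) q.2, ⟨?_, ?_⟩, habsmv.symm, habsv.symm⟩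
  · rw [habsv]; exact hq
  · rw [habsmv]; exact hp

lemma sim_comm {p q : OPE V} (hp : A.IsOPE p) (hq : A.IsOPE q) :
    A.Sim (p.d q) (q.d p) := by
  apply A.sim_reindex (A.isOPE_d hp hq) (A.isOPE_d hq hp) (swapEquiv q.1 p.1)
  intro i j
  show dsum q.2 p.2 i j = dsum p.2 q.2 _ _
  have hi := swapEquiv_val q.1 p.1 i
  have hj := swapEquiv_val q.1 p.1 j
  have hi2 := (swapEquiv q.1 p.1 i).isLt
  have hj2 := (swapEquiv q.1 p.1 j).isLt
  simp only [dsum]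
  split_ifs at hi hj ⊢ <;> first | rfl | (exfalso; omega) | (apply s13_mk_congr <;> omega)

lemma sim_assoc {p q r : OPE V} (hp : A.IsOPE p) (hq : A.IsOPE q) (hr : A.IsOPE r) :
    A.Sim ((p.d q).d r) (p.d (q.d r)) := by
  apply A.sim_reindex (A.isOPE_d (A.isOPE_d hp hq) hr) (A.isOPE_d hp (A.isOPE_d hq hr))
    (finCongr (Nat.add_assoc p.1 q.1 r.1).symm)
  intro i j
  show dsum p.2 (dsum q.2 r.2) i j = dsum (dsum p.2 q.2) r.2 _ _
  have hi : ((finCongr (Nat.add_assoc p.1 q.1 r.1).symm i : Fin _) : ℕ) = (i : ℕ) := rfl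
  have hj : ((finCongr (Nat.add_assoc p.1 q.1 r.1).symm j : Fin _) : ℕ) = (j : ℕ) := rfl
  have hi2 := (finCongr (Nat.add_assoc p.1 q.1 r.1).symm i).isLt
  have hj2 := (finCongr (Nat.add_assoc p.1 q.1 r.1).symm j).isLt
  obtain ⟨i, hi0⟩ := i
  obtain ⟨j, hj0⟩ := j
  show dsum p.2 (dsum q.2 r.2) ⟨i, hi0⟩ ⟨j, hj0⟩ = dsum (dsum p.2 q.2) r.2 ⟨i, by simp only [OPE.d] at hi0 ⊢; omega⟩ ⟨j, by simp only [OPE.d] at hj0 ⊢; omega⟩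
  simp only [dsum]
  split_ifs <;> first | rfl | (exfalso; omega) | (apply s13_mk_congr <;> omega)

lemma sim_dzero {p : OPE V} (hp : A.IsOPE p) : A.Sim (p.d (OPE.zero V)) p := by
  have habsv : A.abs (p.1 + 1) p.1 (dsum p.2 (0 : Matrix (Fin 1) (Fin 0) V)) = p.2 := by
    have h2 : dsum (A.abs p.1 p.1 p.2) (A.abs 1 0 (0 : Matrix (Fin 1) (Fin 0) V)) = p.2 := by
      rw [A.abs_of_pos _ _ (A.op_pos hp)]
      exact s13_dsum_nil p.2 _
    exact (A.abs_dsum p.1 p.1 1 0 p.2 0).trans h2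
  have hmv : mstar (dsum p.2 (0 : Matrix (Fin 1) (Fin 0) V))
      = dsum p.2 (0 : Matrix (Fin 0) (Fin 1) V) := by
    refine (s13_mstar_dsum p.2 0).trans ?_
    rw [hp.1, s13_mstar_zero]
  have habsmv : A.abs p.1 (p.1 + 1) (mstar (dsum p.2 (0 : Matrix (Fin 1) (Fin 0) V)))
      = dsum p.2 (0 : Matrix (Fin 1) (Fin 1) V) := by
    have h3 : dsum (A.abs p.1 p.1 p.2) (A.abs 0 1 (0 : Matrix (Fin 0) (Fin 1) V))
        = dsum p.2 (0 : Matrix (Fin 1) (Fin 1) V) := by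
      rw [A.abs_of_pos _ _ (A.op_pos hp), A.abs_rowEmpty]
    exact (congrArg (A.abs p.1 (p.1 + 1)) hmv).trans
      ((A.abs_dsum p.1 p.1 0 1 p.2 0).trans h3)
  refine ⟨dsum p.2 (0 : Matrix (Fin 1) (Fin 0) V), ⟨?_, ?_⟩, habsmv.symm, habsv.symm⟩
  · simp only [OPE.d, OPE.zero]
    rw [habsv]; exact hp
  · simp only [OPE.d, OPE.zero]
    rw [habsmv]; exact A.isOP_dsum hp A.isOP_zero

lemma asim_of_sim {p q : OPE V} (h : A.Sim p q) : A.ASim p q :=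
  ⟨OPE.zero V, A.isOPE_zero, A.sim_d h (A.sim_refl A.isOPE_zero)⟩

lemma asim_refl {p : OPE V} (hp : A.IsOPE p) : A.ASim p p :=
  A.asim_of_sim (A.sim_refl hp)

lemma asim_symm {p q : OPE V} (h : A.ASim p q) : A.ASim q p := by
  obtain ⟨r, hr, hs⟩ := h
  exact ⟨r, hr, A.sim_symm hs⟩

lemma sim_interchange (hT : A.CondT) {a b c d : OPE V} (ha : A.IsOPE a) (hb : A.IsOPE b)
    (hc : A.IsOPE c) (hd : A.IsOPE d) :
    A.Sim ((a.d b).d (c.d d)) ((a.d c).d (b.d d)) := by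
  have T : ∀ {x y z : OPE V}, A.Sim x y → A.Sim y z → A.Sim x z := fun h1 h2 =>
    A.sim_trans hT h1 h2
  have e1 := A.sim_assoc ha hb (A.isOPE_d hc hd)
  have e2 := A.sim_d (A.sim_refl ha) (A.sim_symm (A.sim_assoc hb hc hd))
  have e3 := A.sim_d (A.sim_refl ha) (A.sim_d (A.sim_comm hb hc) (A.sim_refl hd))
  have e4 := A.sim_d (A.sim_refl ha) (A.sim_assoc hc hb hd)
  have e5 := A.sim_symm (A.sim_assoc ha hc (A.isOPE_d hb hd))
  exact T e1 (T e2 (T e3 (T e4 e5)))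

lemma asim_trans (hT : A.CondT) {p q t : OPE V} (hp : A.IsOPE p) (hq : A.IsOPE q)
    (ht : A.IsOPE t) (h1 : A.ASim p q) (h2 : A.ASim q t) : A.ASim p t := by
  obtain ⟨r, hr, hs1⟩ := h1
  obtain ⟨s, hs, hs2⟩ := h2
  have T : ∀ {x y z : OPE V}, A.Sim x y → A.Sim y z → A.Sim x z := fun h1 h2 =>
    A.sim_trans hT h1 h2
  refine ⟨r.d s, A.isOPE_d hr hs, ?_⟩
  have e1 := A.sim_symm (A.sim_assoc hp hr hs)
  have e2 := A.sim_d hs1 (A.sim_refl hs)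
  have e3 := A.sim_assoc hq hr hs
  have e4 := A.sim_d (A.sim_refl hq) (A.sim_comm hr hs)
  have e5 := A.sim_symm (A.sim_assoc hq hs hr)
  have e6 := A.sim_d hs2 (A.sim_refl hr)
  have e7 := A.sim_assoc ht hs hr
  have e8 := A.sim_d (A.sim_refl ht) (A.sim_comm hs hr)
  exact T e1 (T e2 (T e3 (T e4 (T e5 (T e6 (T e7 e8))))))

lemma asim_d (hT : A.CondT) {p p' q q' : OPE V} (hp : A.IsOPE p) (hp' : A.IsOPE p')
    (hq : A.IsOPE q) (hq' : A.IsOPE q') (h1 : A.ASim p p') (h2 : A.ASim q q') :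
    A.ASim (p.d q) (p'.d q') := by
  obtain ⟨r, hr, hs1⟩ := h1
  obtain ⟨s, hs, hs2⟩ := h2
  have T : ∀ {x y z : OPE V}, A.Sim x y → A.Sim y z → A.Sim x z := fun h1 h2 =>
    A.sim_trans hT h1 h2
  refine ⟨r.d s, A.isOPE_d hr hs, ?_⟩
  have e1 := A.sim_interchange hT hp hq hr hs
  have e2 := A.sim_d hs1 hs2
  have e3 := A.sim_symm (A.sim_interchange hT hp' hq' hr hs)
  exact T e1 (T e2 e3)

end AMOUS

end Statement13Aux


/-- `(𝒪𝒫_∞(V)/≈, +)` with `[p] + [q] = [p ⊕ q]` is a well-defined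
abelian semigroup with identity `[0]` satisfying the cancellation law. -/
theorem statement13 {V : Type*} [AddCommGroup V] [Module ℂ V] [StarAddMonoid V] [StarModule ℂ V] (A : AMOUS V) (habs : A.IsAbsolute) (hT : A.CondT) :
    -- `≈` is an equivalence relation on `𝒪𝒫_∞(V)`
    ((∀ p : OPE V, A.IsOPE p → A.ASim p p) ∧
      (∀ p q : OPE V, A.IsOPE p → A.IsOPE q → A.ASim p q → A.ASim q p) ∧
      (∀ p q r : OPE V, A.IsOPE p → A.IsOPE q → A.IsOPE r →
        A.ASim p q → A.ASim q r → A.ASim p r)) ∧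
    -- `+` is well defined on equivalence classes
    (∀ p p' q q' : OPE V, A.IsOPE p → A.IsOPE p' → A.IsOPE q → A.IsOPE q' →
      A.ASim p p' → A.ASim q q' → A.ASim (p.d q) (p'.d q')) ∧
    -- `[p] + [0] = [p]`
    (∀ p : OPE V, A.IsOPE p → A.ASim (p.d (OPE.zero V)) p) ∧
    -- commutativity
    (∀ p q : OPE V, A.IsOPE p → A.IsOPE q → A.ASim (p.d q) (q.d p)) ∧
    -- associativity
    (∀ p q r : OPE V, A.IsOPE p → A.IsOPE q → A.IsOPE r →
      A.ASim ((p.d q).d r) (p.d (q.d r))) ∧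
    -- cancellation
    (∀ p q r : OPE V, A.IsOPE p → A.IsOPE q → A.IsOPE r →
      A.ASim (p.d r) (q.d r) → A.ASim p q) := by
  refine ⟨⟨fun p hp => A.asim_refl hp, fun p q hp hq h => A.asim_symm h,
    fun p q r hp hq hr h1 h2 => A.asim_trans hT hp hq hr h1 h2⟩,
    fun p p' q q' hp hp' hq hq' h1 h2 => A.asim_d hT hp hp' hq hq' h1 h2,
    fun p hp => A.asim_of_sim (A.sim_dzero hp),
    fun p q hp hq => A.asim_of_sim (A.sim_comm hp hq),
    fun p q r hp hq hr => A.asim_of_sim (A.sim_assoc hp hq hr),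
    ?_⟩
  intro p q r hp hq hr h
  obtain ⟨s, hs, hsim⟩ := h
  have T : ∀ {x y z : OPE V}, A.Sim x y → A.Sim y z → A.Sim x z := fun h1 h2 =>
    A.sim_trans hT h1 h2
  refine ⟨r.d s, A.isOPE_d hr hs, ?_⟩
  exact T (A.sim_symm (A.sim_assoc hp hr hs)) (T hsim (A.sim_assoc hq hr hs))
end
end

section
/- Let (V, e) be an absolute matrix order unit space satisfying (T) with eⁿ finite for all n. Then [(e, 0)] is a distinguished order unit for the ordered abelian group (K₀(V), K₀(V)⁺): for every g ∈ K₀(V) there exists n ∈ ℕ with −n[(e,0)] ≤ g ≤ n[(e,0)]. -/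
noncomputable section

open scoped Matrix.Norms.L2Operator

/-! ### Auxiliary development for Statement 16 -/

namespace S16

set_option linter.unusedSectionVars false

open scoped Matrix

variable {V : Type*} [AddCommGroup V] [Module ℂ V] [StarAddMonoid V] [StarModule ℂ V]

/-! #### Basic algebra of `aSmul`, `smulB`, `mstar`, `dsum` -/

theorem aSmul_one {m n : ℕ} (v : Matrix (Fin m) (Fin n) V) : aSmul 1 v = v := by
  funext i j
  simp [aSmul, Matrix.one_apply, ite_smul]

theorem smulB_one {m n : ℕ} (v : Matrix (Fin m) (Fin n) V) : smulB v 1 = v := by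
  funext i j
  simp [smulB, Matrix.one_apply, ite_smul]

theorem aSmul_aSmul {r m n s : ℕ} (a : Matrix (Fin r) (Fin m) ℂ) (b : Matrix (Fin m) (Fin s) ℂ)
    (v : Matrix (Fin s) (Fin n) V) : aSmul a (aSmul b v) = aSmul (a * b) v := by
  funext i j
  simp only [aSmul, Matrix.mul_apply, Finset.smul_sum, Finset.sum_smul, smul_smul]
  rw [Finset.sum_comm]

theorem smulB_mul {m n s t : ℕ} (v : Matrix (Fin m) (Fin n) V) (a : Matrix (Fin n) (Fin s) ℂ)
    (b : Matrix (Fin s) (Fin t) ℂ) : smulB (smulB v a) b = smulB v (a * b) := by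
  funext i j
  simp only [smulB, Matrix.mul_apply, Finset.smul_sum, Finset.sum_smul, smul_smul]
  rw [Finset.sum_comm]
  refine Finset.sum_congr rfl fun k _ => Finset.sum_congr rfl fun l _ => ?_
  rw [mul_comm]

theorem aSmul_smulB {r m n s : ℕ} (a : Matrix (Fin r) (Fin m) ℂ) (v : Matrix (Fin m) (Fin n) V)
    (b : Matrix (Fin n) (Fin s) ℂ) : aSmul a (smulB v b) = smulB (aSmul a v) b := by
  funext i j
  simp only [aSmul, smulB, Finset.smul_sum, smul_smul]
  rw [Finset.sum_comm]
  refine Finset.sum_congr rfl fun k _ => Finset.sum_congr rfl fun l _ => ?_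
  rw [mul_comm]

theorem aSmul_add {r m n : ℕ} (a : Matrix (Fin r) (Fin m) ℂ) (u v : Matrix (Fin m) (Fin n) V) :
    aSmul a (u + v) = aSmul a u + aSmul a v := by
  funext i j
  simp [aSmul, smul_add, Finset.sum_add_distrib]

theorem aSmul_sub {r m n : ℕ} (a : Matrix (Fin r) (Fin m) ℂ) (u v : Matrix (Fin m) (Fin n) V) :
    aSmul a (u - v) = aSmul a u - aSmul a v := by
  funext i j
  simp [aSmul, smul_sub, Finset.sum_sub_distrib]

theorem aSmul_csmul {r m n : ℕ} (a : Matrix (Fin r) (Fin m) ℂ) (c : ℂ)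
    (v : Matrix (Fin m) (Fin n) V) : aSmul a (c • v) = c • aSmul a v := by
  funext i j
  simp [aSmul, Finset.smul_sum, smul_comm c]

theorem smulB_add {m n s : ℕ} (u v : Matrix (Fin m) (Fin n) V) (b : Matrix (Fin n) (Fin s) ℂ) :
    smulB (u + v) b = smulB u b + smulB v b := by
  funext i j
  simp [smulB, smul_add, Finset.sum_add_distrib]

theorem smulB_sub {m n s : ℕ} (u v : Matrix (Fin m) (Fin n) V) (b : Matrix (Fin n) (Fin s) ℂ) :
    smulB (u - v) b = smulB u b - smulB v b := by
  funext i j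
  simp [smulB, smul_sub, Finset.sum_sub_distrib]

theorem smulB_csmul {m n s : ℕ} (c : ℂ) (v : Matrix (Fin m) (Fin n) V)
    (b : Matrix (Fin n) (Fin s) ℂ) : smulB (c • v) b = c • smulB v b := by
  funext i j
  simp [smulB, Finset.smul_sum, smul_comm c]

theorem aSmul_zeroM {r m n : ℕ} (v : Matrix (Fin m) (Fin n) V) :
    aSmul (0 : Matrix (Fin r) (Fin m) ℂ) v = 0 := by
  funext i j
  simp [aSmul]

theorem mstar_mstar {m n : ℕ} (v : Matrix (Fin m) (Fin n) V) : mstar (mstar v) = v := by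
  funext i j; simp [mstar]

theorem mstar_add {m n : ℕ} (u v : Matrix (Fin m) (Fin n) V) :
    mstar (u + v) = mstar u + mstar v := by
  funext i j; simp [mstar, star_add]

theorem mstar_sub {m n : ℕ} (u v : Matrix (Fin m) (Fin n) V) :
    mstar (u - v) = mstar u - mstar v := by
  funext i j; simp [mstar, star_sub]

theorem mstar_csmul {m n : ℕ} (c : ℂ) (v : Matrix (Fin m) (Fin n) V) :
    mstar (c • v) = star c • mstar v := by
  funext i j; simp [mstar, star_smul]

theorem mstar_aSmul {r m n : ℕ} (a : Matrix (Fin r) (Fin m) ℂ) (v : Matrix (Fin m) (Fin n) V) :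
    mstar (aSmul a v) = smulB (mstar v) aᴴ := by
  funext i j
  simp [mstar, aSmul, smulB, star_sum, star_smul, Matrix.conjTranspose_apply]

theorem mstar_smulB {m n s : ℕ} (v : Matrix (Fin m) (Fin n) V) (b : Matrix (Fin n) (Fin s) ℂ) :
    mstar (smulB v b) = aSmul bᴴ (mstar v) := by
  funext i j
  simp [mstar, aSmul, smulB, star_sum, star_smul, Matrix.conjTranspose_apply]

/-! #### `dsum` lemmas -/

theorem dsum_apply_ll {m n r s : ℕ} (v : Matrix (Fin m) (Fin n) V) (w : Matrix (Fin r) (Fin s) V)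
    {i : Fin (m + r)} {j : Fin (n + s)} (hi : (i : ℕ) < m) (hj : (j : ℕ) < n) :
    dsum v w i j = v ⟨i, hi⟩ ⟨j, hj⟩ := by
  simp [dsum, hi, hj]

theorem dsum_apply_rr {m n r s : ℕ} (v : Matrix (Fin m) (Fin n) V) (w : Matrix (Fin r) (Fin s) V)
    {i : Fin (m + r)} {j : Fin (n + s)} (hi : ¬ (i : ℕ) < m) (hj : ¬ (j : ℕ) < n) :
    dsum v w i j = w ⟨(i : ℕ) - m, by have := i.isLt; omega⟩ ⟨(j : ℕ) - n, by have := j.isLt; omega⟩ := by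
  simp [dsum, hi, hj]

theorem dsum_apply_lr {m n r s : ℕ} (v : Matrix (Fin m) (Fin n) V) (w : Matrix (Fin r) (Fin s) V)
    {i : Fin (m + r)} {j : Fin (n + s)} (hi : (i : ℕ) < m) (hj : ¬ (j : ℕ) < n) :
    dsum v w i j = 0 := by
  simp [dsum, hi, hj]

theorem dsum_apply_rl {m n r s : ℕ} (v : Matrix (Fin m) (Fin n) V) (w : Matrix (Fin r) (Fin s) V)
    {i : Fin (m + r)} {j : Fin (n + s)} (hi : ¬ (i : ℕ) < m) (hj : (j : ℕ) < n) :
    dsum v w i j = 0 := by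
  simp [dsum, hi, hj]

theorem mstar_dsum {m n r s : ℕ} (v : Matrix (Fin m) (Fin n) V) (w : Matrix (Fin r) (Fin s) V) :
    mstar (dsum v w) = dsum (mstar v) (mstar w) := by
  funext i j
  by_cases hi : (i : ℕ) < n <;> by_cases hj : (j : ℕ) < m
  · rw [dsum_apply_ll _ _ hi hj]; simp [mstar, dsum, hi, hj]
  · rw [dsum_apply_lr _ _ hi hj]; simp [mstar, dsum, hi, hj]
  · rw [dsum_apply_rl _ _ hi hj]; simp [mstar, dsum, hi, hj]
  · rw [dsum_apply_rr _ _ hi hj]; simp [mstar, dsum, hi, hj]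

theorem dsum_add {m n r s : ℕ} (v v' : Matrix (Fin m) (Fin n) V) (w w' : Matrix (Fin r) (Fin s) V) :
    dsum v w + dsum v' w' = dsum (v + v') (w + w') := by
  funext i j
  by_cases hi : (i : ℕ) < m <;> by_cases hj : (j : ℕ) < n <;>
    simp [dsum, hi, hj]

theorem dsum_sub {m n r s : ℕ} (v v' : Matrix (Fin m) (Fin n) V) (w w' : Matrix (Fin r) (Fin s) V) :
    dsum v w - dsum v' w' = dsum (v - v') (w - w') := by
  funext i j
  by_cases hi : (i : ℕ) < m <;> by_cases hj : (j : ℕ) < n <;>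
    simp [dsum, hi, hj]

theorem dsum_csmul {m n r s : ℕ} (c : ℂ) (v : Matrix (Fin m) (Fin n) V)
    (w : Matrix (Fin r) (Fin s) V) : c • dsum v w = dsum (c • v) (c • w) := by
  funext i j
  by_cases hi : (i : ℕ) < m <;> by_cases hj : (j : ℕ) < n <;>
    simp [dsum, hi, hj]

theorem dsum_fin0 {c d : ℕ} (u : Matrix (Fin c) (Fin d) V) (w : Matrix (Fin 0) (Fin 0) V) :
    dsum u w = u := by
  funext i j
  have hi : (i : ℕ) < c := i.isLt
  have hj : (j : ℕ) < d := j.isLt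
  rw [dsum_apply_ll _ _ hi hj]
  exact congrArg₂ u (Fin.eta i hi) (Fin.eta j hj)

theorem diagE_dsum (e : V) (m n : ℕ) : diagE e (m + n) = dsum (diagE e m) (diagE e n) := by
  funext i j
  by_cases hi : (i : ℕ) < m <;> by_cases hj : (j : ℕ) < m
  · rw [dsum_apply_ll _ _ hi hj]
    simp [diagE, Fin.ext_iff]
  · rw [dsum_apply_lr _ _ hi hj]
    simp only [diagE, Matrix.of_apply, Fin.ext_iff]
    rw [if_neg (by omega)]
  · rw [dsum_apply_rl _ _ hi hj]
    simp only [diagE, Matrix.of_apply, Fin.ext_iff]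
    rw [if_neg (by omega)]
  · rw [dsum_apply_rr _ _ hi hj]
    simp only [diagE, Matrix.of_apply, Fin.ext_iff]
    have := i.isLt
    by_cases h : (i : ℕ) = (j : ℕ)
    · rw [if_pos h, if_pos (by omega)]
    · rw [if_neg h, if_neg (by omega)]

/-! #### Permutation matrices -/

/-- The permutation matrix of an equivalence of index sets. -/
def PmE {a b : ℕ} (σ : Fin a ≃ Fin b) : Matrix (Fin a) (Fin b) ℂ :=
  fun i j => if σ i = j then 1 else 0

theorem PmE_conjTranspose {a b : ℕ} (σ : Fin a ≃ Fin b) : (PmE σ)ᴴ = PmE σ.symm := by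
  funext i j
  simp only [PmE, Matrix.conjTranspose_apply]
  by_cases h : σ j = i
  · rw [if_pos h, if_pos (by simp [← h]), star_one]
  · rw [if_neg h, if_neg (by intro hc; exact h (by simp [← hc])), star_zero]

theorem PmE_mul {a b c : ℕ} (σ : Fin a ≃ Fin b) (τ : Fin b ≃ Fin c) :
    PmE σ * PmE τ = PmE (σ.trans τ) := by
  funext i j
  simp only [PmE, Matrix.mul_apply, Equiv.trans_apply]
  rw [Finset.sum_eq_single (σ i)]
  · rw [if_pos rfl, one_mul]
    congr
  · intro k _ hk
    rw [if_neg (fun hc => hk hc.symm), zero_mul]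
  · simp

theorem PmE_refl {a : ℕ} : PmE (Equiv.refl (Fin a)) = 1 := by
  funext i j
  simp [PmE, Matrix.one_apply]
  congr

theorem PmE_unitary_left {a b : ℕ} (σ : Fin a ≃ Fin b) : (PmE σ)ᴴ * PmE σ = 1 := by
  rw [PmE_conjTranspose, PmE_mul, Equiv.symm_trans_self, PmE_refl]

theorem PmE_unitary_right {a b : ℕ} (σ : Fin a ≃ Fin b) : PmE σ * (PmE σ)ᴴ = 1 := by
  rw [PmE_conjTranspose, PmE_mul, Equiv.self_trans_symm, PmE_refl]

theorem aSmul_PmE {a b n : ℕ} (σ : Fin a ≃ Fin b) (z : Matrix (Fin b) (Fin n) V) :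
    aSmul (PmE σ) z = fun i j => z (σ i) j := by
  funext i j
  simp [aSmul, PmE, ite_smul, Finset.sum_ite_eq]

theorem smulB_PmE {n a b : ℕ} (z : Matrix (Fin n) (Fin a) V) (σ : Fin a ≃ Fin b) :
    smulB z (PmE σ) = fun i j => z i (σ.symm j) := by
  funext i j
  simp only [smulB, PmE]
  rw [Finset.sum_eq_single (σ.symm j)]
  · simp
  · intro k _ hk
    rw [if_neg (by simpa [Equiv.apply_eq_iff_eq_symm_apply] using hk), zero_smul]
  · simp

/-- The block-swapping equivalence. -/
def swapEquiv (k l : ℕ) : Fin (k + l) ≃ Fin (l + k) where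
  toFun i := ⟨if (i : ℕ) < k then (i : ℕ) + l else (i : ℕ) - k, by
    have := i.isLt; split <;> omega⟩
  invFun j := ⟨if (j : ℕ) < l then (j : ℕ) + k else (j : ℕ) - l, by
    have := j.isLt; split <;> omega⟩
  left_inv i := by
    have := i.isLt
    apply Fin.ext
    simp only [Fin.val_mk]
    split_ifs <;> omega
  right_inv j := by
    have := j.isLt
    apply Fin.ext
    simp only [Fin.val_mk]
    split_ifs <;> omega

theorem swapEquiv_apply {k l : ℕ} (i : Fin (k + l)) :
    ((swapEquiv k l) i : ℕ) = if (i : ℕ) < k then (i : ℕ) + l else (i : ℕ) - k := rfl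

theorem swapEquiv_symm_apply {k l : ℕ} (j : Fin (l + k)) :
    ((swapEquiv k l).symm j : ℕ) = if (j : ℕ) < l then (j : ℕ) + k else (j : ℕ) - l := rfl

/-! #### Norm facts -/

theorem cnorm_nonneg {r m : ℕ} (a : Matrix (Fin r) (Fin m) ℂ) : 0 ≤ cnorm a :=
  norm_nonneg _

theorem cnorm_le_one_of_isometry {r m : ℕ} (a : Matrix (Fin r) (Fin m) ℂ)
    (h : aᴴ * a = 1) : cnorm a ≤ 1 := by
  have h1 : ‖aᴴ * a‖ = ‖a‖ * ‖a‖ := Matrix.l2_opNorm_conjTranspose_mul_self a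
  have h2 : ‖(1 : Matrix (Fin m) (Fin m) ℂ)ᴴ * 1‖ = ‖(1 : Matrix (Fin m) (Fin m) ℂ)‖ *
      ‖(1 : Matrix (Fin m) (Fin m) ℂ)‖ := Matrix.l2_opNorm_conjTranspose_mul_self 1
  simp only [Matrix.conjTranspose_one, mul_one] at h2
  have hone : ‖(1 : Matrix (Fin m) (Fin m) ℂ)‖ ≤ 1 := by nlinarith [norm_nonneg (1 : Matrix (Fin m) (Fin m) ℂ)]
  rw [h] at h1
  have : ‖a‖ * ‖a‖ ≤ 1 := by rw [← h1]; exact hone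
  unfold cnorm
  nlinarith [norm_nonneg a]

theorem cnorm_one_le (m : ℕ) : cnorm (1 : Matrix (Fin m) (Fin m) ℂ) ≤ 1 :=
  cnorm_le_one_of_isometry 1 (by simp)

theorem cnorm_PmE_le {a b : ℕ} (σ : Fin a ≃ Fin b) : cnorm (PmE σ) ≤ 1 :=
  cnorm_le_one_of_isometry _ (PmE_unitary_left σ)

theorem cnorm_conjTranspose {r m : ℕ} (a : Matrix (Fin r) (Fin m) ℂ) :
    cnorm aᴴ = cnorm a := Matrix.l2_opNorm_conjTranspose a

/-! #### Positivity utilities -/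

theorem smulB_zeroV {m n s : ℕ} (b : Matrix (Fin n) (Fin s) ℂ) :
    smulB (0 : Matrix (Fin m) (Fin n) V) b = 0 := by
  funext i j; simp [smulB]

theorem aSmul_zeroV {r m n : ℕ} (a : Matrix (Fin r) (Fin m) ℂ) :
    aSmul a (0 : Matrix (Fin m) (Fin n) V) = 0 := by
  funext i j; simp [aSmul]

theorem aSmul_smul_one {m n : ℕ} (c : ℂ) (v : Matrix (Fin m) (Fin n) V) :
    aSmul (c • (1 : Matrix (Fin m) (Fin m) ℂ)) v = c • v := by
  funext i j
  simp [aSmul, Matrix.smul_apply, Matrix.one_apply, smul_eq_mul, mul_ite, mul_one, mul_zero,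
    ite_smul, zero_smul, Finset.sum_ite_eq, Finset.sum_ite_eq']

theorem smulB_smul_one {m n : ℕ} (c : ℂ) (v : Matrix (Fin m) (Fin n) V) :
    smulB v (c • (1 : Matrix (Fin n) (Fin n) ℂ)) = c • v := by
  funext i j
  simp [smulB, Matrix.smul_apply, Matrix.one_apply, smul_eq_mul, mul_ite, mul_one, mul_zero,
    ite_smul, zero_smul, Finset.sum_ite_eq, Finset.sum_ite_eq']

section WithA

variable (A : AMOUS V)

theorem pos_zero (n : ℕ) : (0 : Matrix (Fin n) (Fin n) V) ∈ A.pos n := by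
  have h := A.pos_conj n n 0 (A.abs n n 0) (A.abs_mem n n 0)
  rwa [Matrix.conjTranspose_zero, aSmul_zeroM] at h

theorem posReal_smul {k : ℝ} (hk : 0 ≤ k) {n : ℕ} {v : Matrix (Fin n) (Fin n) V}
    (hv : v ∈ A.pos n) : (k : ℂ) • v ∈ A.pos n := by
  have h := A.pos_conj n n ((Real.sqrt k : ℂ) • 1) v hv
  rw [Matrix.conjTranspose_smul, Matrix.conjTranspose_one, smulB_smul_one, aSmul_csmul,
    aSmul_smul_one, smul_smul] at h
  have heq : ((Real.sqrt k : ℂ)) * (starRingEnd ℂ) ((Real.sqrt k : ℝ) : ℂ) = (k : ℂ) := by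
    rw [Complex.conj_ofReal, ← Complex.ofReal_mul, Real.mul_self_sqrt hk]
  rwa [RCLike.star_def, heq] at h

theorem posN_proper {n : ℕ} {v : Matrix (Fin n) (Fin n) V} (hv : v ∈ A.pos n)
    (hv' : -v ∈ A.pos n) : v = 0 := by
  have key : ∀ a : Matrix (Fin n) (Fin 1) ℂ, aSmul aᴴ (smulB v a) = 0 := by
    intro a
    have h1 := A.pos_conj 1 n a v hv
    have h2 := A.pos_conj 1 n a (-v) hv'
    have hneg : smulB (-v) a = -(smulB v a) := by
      funext i j; simp [smulB, Finset.sum_neg_distrib]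
    have hneg2 : aSmul aᴴ (-(smulB v a)) = -(aSmul aᴴ (smulB v a)) := by
      funext i j; simp [aSmul, Finset.sum_neg_distrib]
    rw [hneg, hneg2] at h2
    exact A.proper _ h1 h2
  -- the value of the compression by a column matrix
  have entry : ∀ a : Matrix (Fin n) (Fin 1) ℂ,
      (aSmul aᴴ (smulB v a)) 0 0 = ∑ k, ∑ t, (star (a k 0) * a t 0) • v k t := by
    intro a
    simp only [aSmul, smulB, Matrix.conjTranspose_apply, Finset.smul_sum, smul_smul]
  have key2 : ∀ a : Matrix (Fin n) (Fin 1) ℂ,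
      (∑ k, ∑ t, (star (a k 0) * a t 0) • v k t) = 0 := by
    intro a
    rw [← entry a, key a]
    rfl
  -- double delta sums
  have dds : ∀ (c₁ c₂ : ℂ) (i j : Fin n),
      (∑ k, ∑ t, ((if k = i then c₁ else 0) * (if t = j then c₂ else 0)) • v k t)
        = (c₁ * c₂) • v i j := by
    intro c₁ c₂ i j
    rw [Finset.sum_eq_single i]
    · rw [Finset.sum_eq_single j]
      · rw [if_pos rfl, if_pos rfl]
      · intro t _ ht; rw [if_neg ht, mul_zero, zero_smul]
      · simp
    · intro k _ hk
      apply Finset.sum_eq_zero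
      intro t _
      rw [if_neg hk, zero_mul, zero_smul]
    · simp
  have expand : ∀ (c₁ c₂ : ℂ) (i j : Fin n),
      (c₁ ≠ 0 ∨ c₂ ≠ 0) → (star c₁ * c₁) • v i i + (star c₁ * c₂) • v i j
        + (star c₂ * c₁) • v j i + (star c₂ * c₂) • v j j = 0 := by
    intro c₁ c₂ i j _
    have h := key2 (fun k _ => (if k = i then c₁ else 0) + (if k = j then c₂ else 0))
    have hsplit : (∑ k, ∑ t,
        (star ((if k = i then c₁ else 0) + (if k = j then c₂ else 0)) *
          ((if t = i then c₁ else 0) + (if t = j then c₂ else 0))) • v k t)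
        = (star c₁ * c₁) • v i i + (star c₁ * c₂) • v i j
          + (star c₂ * c₁) • v j i + (star c₂ * c₂) • v j j := by
      have : ∀ k t : Fin n,
          (star ((if k = i then c₁ else 0) + (if k = j then c₂ else 0)) *
            ((if t = i then c₁ else 0) + (if t = j then c₂ else 0))) • v k t
          = ((if k = i then star c₁ else 0) * (if t = i then c₁ else 0)) • v k t
            + ((if k = i then star c₁ else 0) * (if t = j then c₂ else 0)) • v k t
            + ((if k = j then star c₂ else 0) * (if t = i then c₁ else 0)) • v k t
            + ((if k = j then star c₂ else 0) * (if t = j then c₂ else 0)) • v k t := by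
        intro k t
        rw [star_add, apply_ite star, apply_ite star, star_zero, add_mul, mul_add, mul_add,
          add_smul, add_smul, add_smul]
        ring_nf
        abel
      simp only [this, Finset.sum_add_distrib]
      have e1 := dds (star c₁) c₁ i i
      have e2 := dds (star c₁) c₂ i j
      have e3 := dds (star c₂) c₁ j i
      have e4 := dds (star c₂) c₂ j j
      rw [e1, e2, e3, e4]
    rw [hsplit] at h
    exact h
  -- diagonal entries vanish
  have diag : ∀ i : Fin n, v i i = 0 := by
    intro i
    have h := expand 1 0 i i (Or.inl one_ne_zero)
    simpa using h
  funext i j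
  by_cases hij : i = j
  · rw [hij]; exact diag j
  · have h1 := expand 1 1 i j (Or.inl one_ne_zero)
    simp only [star_one, one_mul, mul_one, one_smul, diag] at h1
    have h1' : v i j + v j i = 0 := by simpa using h1
    have h2 := expand 1 Complex.I i j (Or.inl one_ne_zero)
    simp only [star_one, one_mul, mul_one, one_smul, diag] at h2
    have h2' : Complex.I • v i j - Complex.I • v j i = 0 := by
      rw [Complex.star_def, Complex.conj_I] at h2
      have := h2
      simpa [sub_eq_add_neg, neg_smul] using this
    have hji : v j i = -(v i j) := eq_neg_of_add_eq_zero_right h1'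
    rw [hji] at h2'
    have h3 : (2 * Complex.I) • v i j = 0 := by
      rw [two_mul, add_smul, ← h2']
      module
    have h4 := congrArg (fun w => (2 * Complex.I)⁻¹ • w) h3
    simpa [smul_smul,
      inv_mul_cancel₀ (show (2 : ℂ) * Complex.I ≠ 0 by simp [Complex.I_ne_zero])] using h4

theorem posSqueeze {n : ℕ} {x y : Matrix (Fin n) (Fin n) V} (hx : x ∈ A.pos n)
    (hy : y ∈ A.pos n) {c c' : ℝ} (hc0 : 0 ≤ c) (hc1 : c ≤ 1) (hc0' : 0 ≤ c') (hc1' : c' ≤ 1)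
    (h1 : (c : ℂ) • y - x ∈ A.pos n) (h2 : (c' : ℂ) • x - y ∈ A.pos n) : x = y := by
  have k3 : ((1 - c : ℝ) : ℂ) • y ∈ A.pos n := posReal_smul A (by linarith) hy
  have k4 : ((1 - c' : ℝ) : ℂ) • x ∈ A.pos n := posReal_smul A (by linarith) hx
  have hsum : ((c : ℂ) • y - x) + (((c' : ℂ) • x - y) + (((1 - c : ℝ) : ℂ) • y
      + ((1 - c' : ℝ) : ℂ) • x)) = 0 := by
    push_cast
    module
  have e1 : (c : ℂ) • y - x = 0 := by
    refine posN_proper A h1 ?_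
    rw [neg_eq_of_add_eq_zero_right hsum]
    exact A.pos_add n _ h2 _ (A.pos_add n _ k3 _ k4)
  have e3 : ((1 - c : ℝ) : ℂ) • y = 0 := by
    refine posN_proper A k3 ?_
    have hsum2 : ((1 - c : ℝ) : ℂ) • y + (((c : ℂ) • y - x) + (((c' : ℂ) • x - y)
        + ((1 - c' : ℝ) : ℂ) • x)) = 0 := by rw [← hsum]; abel
    rw [neg_eq_of_add_eq_zero_right hsum2]
    exact A.pos_add n _ h1 _ (A.pos_add n _ h2 _ k4)
  have hxcy : x = (c : ℂ) • y := (sub_eq_zero.mp e1).symm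
  have hy' : y = (c : ℂ) • y := by
    have hdec : y = (c : ℂ) • y + ((1 - c : ℝ) : ℂ) • y := by push_cast; module
    conv_lhs => rw [hdec]
    rw [e3, add_zero]
  rw [hxcy]
  exact hy'.symm

/-! #### Rules for the absolute value under isometries -/

theorem absRuleL {r m n : ℕ} (α : Matrix (Fin r) (Fin m) ℂ) (hα : αᴴ * α = 1)
    (z : Matrix (Fin m) (Fin n) V) : A.abs r n (aSmul α z) = A.abs m n z := by
  have h1 := A.abs_smul_le r m n n α z 1
  rw [smulB_one, smulB_one, A.abs_of_pos n _ (A.abs_mem m n z)] at h1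
  have h2 := A.abs_smul_le m r n n αᴴ (aSmul α z) 1
  rw [smulB_one, smulB_one, A.abs_of_pos n _ (A.abs_mem r n _), aSmul_aSmul, hα, aSmul_one] at h2
  exact posSqueeze A (A.abs_mem r n _) (A.abs_mem m n z) (cnorm_nonneg α)
    (cnorm_le_one_of_isometry α hα) (cnorm_nonneg αᴴ)
    (by rw [cnorm_conjTranspose]; exact cnorm_le_one_of_isometry α hα) h1 h2

theorem absRposR {n s : ℕ} {w : Matrix (Fin n) (Fin n) V} (hw : w ∈ A.pos n)
    (β : Matrix (Fin n) (Fin s) ℂ) (hβ1 : βᴴ * β = 1) (hβ2 : β * βᴴ = 1) :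
    A.abs n s (smulB w β) = aSmul βᴴ (smulB w β) := by
  have hu : aSmul βᴴ (smulB w β) ∈ A.pos s := A.pos_conj s n β w hw
  have hrw : smulB w β = aSmul β (aSmul βᴴ (smulB w β)) := by
    rw [aSmul_aSmul, hβ2, aSmul_one]
  conv_lhs => rw [hrw]
  rw [absRuleL A β hβ1]
  exact A.abs_of_pos s _ hu

theorem absRU {m n s : ℕ} (z : Matrix (Fin m) (Fin n) V) (β : Matrix (Fin n) (Fin s) ℂ)
    (hβ1 : βᴴ * β = 1) (hβ2 : β * βᴴ = 1) :
    A.abs m s (smulB z β) = aSmul βᴴ (smulB (A.abs m n z) β) := by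
  have hXpos : A.abs m s (smulB z β) ∈ A.pos s := A.abs_mem _ _ _
  have hYpos : aSmul βᴴ (smulB (A.abs m n z) β) ∈ A.pos s :=
    A.pos_conj s n β _ (A.abs_mem m n z)
  have h1 := A.abs_smul_le m m n s 1 z β
  rw [aSmul_one, absRposR A (A.abs_mem m n z) β hβ1 hβ2] at h1
  have h2 := A.abs_smul_le m m s n 1 (smulB z β) βᴴ
  rw [aSmul_one, smulB_mul, hβ2, smulB_one,
    absRposR A hXpos βᴴ (by rw [Matrix.conjTranspose_conjTranspose]; exact hβ2)
      (by rw [Matrix.conjTranspose_conjTranspose]; exact hβ1)] at h2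
  have h3 := A.pos_conj s n β _ h2
  have hsimp : aSmul βᴴ (smulB ((cnorm (1 : Matrix (Fin m) (Fin m) ℂ) : ℂ) •
      aSmul βᴴᴴ (smulB (A.abs m s (smulB z β)) βᴴ) - A.abs m n z) β)
      = (cnorm (1 : Matrix (Fin m) (Fin m) ℂ) : ℂ) • A.abs m s (smulB z β)
        - aSmul βᴴ (smulB (A.abs m n z) β) := by
    rw [smulB_sub, aSmul_sub, smulB_csmul, aSmul_csmul]
    congr 2
    rw [Matrix.conjTranspose_conjTranspose, aSmul_smulB, aSmul_aSmul, hβ1, aSmul_one,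
      smulB_mul, hβ1, smulB_one]
  rw [hsimp] at h3
  exact posSqueeze A hXpos hYpos (cnorm_nonneg _) (cnorm_one_le m) (cnorm_nonneg _)
    (cnorm_one_le m) h1 h3

theorem abs_zeroM (m n : ℕ) : A.abs m n 0 = 0 := by
  have h := A.abs_smul_le m m n n 0 0 1
  rw [smulB_one, aSmul_zeroM] at h
  rw [show ((cnorm (0 : Matrix (Fin m) (Fin m) ℂ) : ℝ) : ℂ) = 0 by
    simp [cnorm], zero_smul, zero_sub] at h
  exact posN_proper A (A.abs_mem m n 0) h

end WithA

section WithA2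

variable (A : AMOUS V)

/-! #### Order projections and basic cone geometry -/

theorem dsum_pos {m r : ℕ} {u : Matrix (Fin m) (Fin m) V} {w : Matrix (Fin r) (Fin r) V}
    (hu : u ∈ A.pos m) (hw : w ∈ A.pos r) : dsum u w ∈ A.pos (m + r) := by
  have h := A.abs_dsum m m r r u w
  rw [A.abs_of_pos _ _ hu, A.abs_of_pos _ _ hw] at h
  have h2 := A.abs_mem (m + r) (m + r) (dsum u w)
  rwa [h] at h2

theorem eN_pos : ∀ n, A.eN n ∈ A.pos n := by
  intro n
  induction n with
  | zero =>
    have : A.eN 0 = (0 : Matrix (Fin 0) (Fin 0) V) := by funext i j; exact i.elim0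
    rw [this]; exact pos_zero A 0
  | succ n ih =>
    have : A.eN (n + 1) = dsum (A.eN n) (A.eN 1) := diagE_dsum A.e n 1
    rw [this]
    exact dsum_pos A ih A.e_pos

theorem mstar_eN (n : ℕ) : mstar (A.eN n) = A.eN n := A.pos_star n _ (eN_pos A n)

theorem OP_sa_core {n : ℕ} {p : Matrix (Fin n) (Fin n) V} (h : mstar p = p) :
    mstar ((2 : ℂ) • p - A.eN n) = (2 : ℂ) • p - A.eN n := by
  rw [mstar_sub, mstar_csmul, h, mstar_eN]
  congr 1
  simp

theorem OP_pos {n : ℕ} {p : Matrix (Fin n) (Fin n) V} (h : A.IsOP n p) : p ∈ A.pos n := by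
  obtain ⟨h1, h2⟩ := h
  have h3 := (A.abs_add_self n _ (OP_sa_core A h1)).1
  rw [h2] at h3
  have h4 : A.eN n + ((2 : ℂ) • p - A.eN n) = (2 : ℂ) • p := by module
  rw [h4] at h3
  have h5 := posReal_smul A (k := 1/2) (by norm_num) h3
  have h6 : ((1/2 : ℝ) : ℂ) • ((2 : ℂ) • p) = p := by push_cast; module
  rwa [h6] at h5

theorem OP_compl_pos {n : ℕ} {p : Matrix (Fin n) (Fin n) V} (h : A.IsOP n p) :
    A.eN n - p ∈ A.pos n := by
  obtain ⟨h1, h2⟩ := h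
  have h3 := (A.abs_add_self n _ (OP_sa_core A h1)).2
  rw [h2] at h3
  have h4 : A.eN n - ((2 : ℂ) • p - A.eN n) = (2 : ℂ) • (A.eN n - p) := by module
  rw [h4] at h3
  have h5 := posReal_smul A (k := 1/2) (by norm_num) h3
  have h6 : ((1/2 : ℝ) : ℂ) • ((2 : ℂ) • (A.eN n - p)) = A.eN n - p := by push_cast; module
  rwa [h6] at h5

theorem OP_compl {n : ℕ} {p : Matrix (Fin n) (Fin n) V} (h : A.IsOP n p) :
    A.IsOP n (A.eN n - p) := by
  refine ⟨by rw [mstar_sub, h.1, mstar_eN], ?_⟩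
  have h4 : (2 : ℂ) • (A.eN n - p) - A.eN n = ((-1 : ℝ) : ℂ) • ((2 : ℂ) • p - A.eN n) := by
    push_cast; module
  rw [h4, A.abs_real_smul n (-1) _ (OP_sa_core A h.1), h.2]
  norm_num

theorem OP_eN (n : ℕ) : A.IsOP n (A.eN n) := by
  refine ⟨mstar_eN A n, ?_⟩
  have : (2 : ℂ) • A.eN n - A.eN n = A.eN n := by module
  rw [this, A.abs_of_pos n _ (eN_pos A n)]

theorem OP_zero (n : ℕ) : A.IsOP n (0 : Matrix (Fin n) (Fin n) V) := by
  refine ⟨by funext i j; simp [mstar], ?_⟩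
  have : (2 : ℂ) • (0 : Matrix (Fin n) (Fin n) V) - A.eN n = ((-1 : ℝ) : ℂ) • A.eN n := by
    push_cast; module
  rw [this, A.abs_real_smul n (-1) _ (mstar_eN A n)]
  norm_num
  exact A.abs_of_pos n _ (eN_pos A n)

theorem OP_dsum {m r : ℕ} {p : Matrix (Fin m) (Fin m) V} {q : Matrix (Fin r) (Fin r) V}
    (hp : A.IsOP m p) (hq : A.IsOP r q) : A.IsOP (m + r) (dsum p q) := by
  refine ⟨by rw [mstar_dsum, hp.1, hq.1], ?_⟩
  have h1 : (2 : ℂ) • dsum p q - A.eN (m + r)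
      = dsum ((2 : ℂ) • p - A.eN m) ((2 : ℂ) • q - A.eN r) := by
    show (2 : ℂ) • dsum p q - diagE A.e (m + r) = _
    rw [diagE_dsum, dsum_csmul, dsum_sub]
    rfl
  rw [h1]
  have h2 := A.abs_dsum m m r r ((2 : ℂ) • p - A.eN m) ((2 : ℂ) • q - A.eN r)
  rw [hp.2, hq.2] at h2
  rw [h2]
  exact (diagE_dsum A.e m r).symm

/-! #### Orthogonality of positive elements -/

theorem perp_symm {n : ℕ} {u v : Matrix (Fin n) (Fin n) V} (hu : u ∈ A.pos n)
    (hv : v ∈ A.pos n) (h : A.Perp u v) : A.Perp v u := by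
  unfold AMOUS.Perp at h ⊢
  have h1 : v - u = ((-1 : ℝ) : ℂ) • (u - v) := by push_cast; module
  have h2 : mstar (u - v) = u - v := by rw [mstar_sub, A.pos_star n u hu, A.pos_star n v hv]
  rw [h1, A.abs_real_smul n (-1) _ h2]
  norm_num
  rw [h, add_comm]

theorem perp_add {n : ℕ} {u v w : Matrix (Fin n) (Fin n) V} (hu : u ∈ A.pos n)
    (hv : v ∈ A.pos n) (hw : w ∈ A.pos n) (h1 : A.Perp u v) (h2 : A.Perp u w) :
    A.Perp u (v + w) := by
  have h := (A.ortho_pm n u hu v hv w hw h1 h2).1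
  unfold AMOUS.Perp
  rwa [A.abs_of_pos n _ (A.pos_add n v hv w hw)] at h

/-! #### Positive and negative parts -/

theorem posP_mem {k : ℕ} {z : Matrix (Fin k) (Fin k) V} (hz : mstar z = z) :
    ((1/2 : ℝ) : ℂ) • (A.abs k k z + z) ∈ A.pos k :=
  posReal_smul A (by norm_num) (A.abs_add_self k z hz).1

theorem negP_mem {k : ℕ} {z : Matrix (Fin k) (Fin k) V} (hz : mstar z = z) :
    ((1/2 : ℝ) : ℂ) • (A.abs k k z - z) ∈ A.pos k :=
  posReal_smul A (by norm_num) (A.abs_add_self k z hz).2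

theorem perp_posP_negP {k : ℕ} {z : Matrix (Fin k) (Fin k) V} (hz : mstar z = z) :
    A.Perp (((1/2 : ℝ) : ℂ) • (A.abs k k z + z)) (((1/2 : ℝ) : ℂ) • (A.abs k k z - z)) := by
  unfold AMOUS.Perp
  have h1 : ((1/2 : ℝ) : ℂ) • (A.abs k k z + z) - ((1/2 : ℝ) : ℂ) • (A.abs k k z - z) = z := by
    push_cast; module
  have h2 : ((1/2 : ℝ) : ℂ) • (A.abs k k z + z) + ((1/2 : ℝ) : ℂ) • (A.abs k k z - z)
      = A.abs k k z := by push_cast; module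
  rw [h1, h2]

/-- Additivity of the absolute value on orthogonal self-adjoint elements. -/
theorem saAdd {k : ℕ} {z z' : Matrix (Fin k) (Fin k) V} (hz : mstar z = z)
    (hz' : mstar z' = z') (hperp : A.Perp (A.abs k k z) (A.abs k k z')) :
    A.abs k k (z + z') = A.abs k k z + A.abs k k z' := by
  have hazpos := A.abs_mem k k z
  have hazpos' := A.abs_mem k k z'
  have hzp := posP_mem A hz
  have hzm := negP_mem A hz
  have hzp' := posP_mem A hz'
  have hzm' := negP_mem A hz'
  have hsub : ∀ w : Matrix (Fin k) (Fin k) V,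
      A.abs k k w - ((1/2 : ℝ) : ℂ) • (A.abs k k w + w) = ((1/2 : ℝ) : ℂ) • (A.abs k k w - w)
      := by intro w; push_cast; module
  have hsub' : ∀ w : Matrix (Fin k) (Fin k) V,
      A.abs k k w - ((1/2 : ℝ) : ℂ) • (A.abs k k w - w) = ((1/2 : ℝ) : ℂ) • (A.abs k k w + w)
      := by intro w; push_cast; module
  -- cross orthogonalities
  have c1 : A.Perp (A.abs k k z) (((1/2 : ℝ) : ℂ) • (A.abs k k z' - z')) :=
    A.absorb k _ hazpos _ hazpos' _ hzm' hperp (by rw [hsub' z']; exact hzp')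
  have c1' : A.Perp (((1/2 : ℝ) : ℂ) • (A.abs k k z + z))
      (((1/2 : ℝ) : ℂ) • (A.abs k k z' - z')) := by
    apply perp_symm A hzm' hzp
    exact A.absorb k _ hzm' _ hazpos _ hzp (perp_symm A hazpos hzm' c1)
      (by rw [hsub z]; exact hzm)
  have c2 : A.Perp (A.abs k k z') (((1/2 : ℝ) : ℂ) • (A.abs k k z - z)) :=
    A.absorb k _ hazpos' _ hazpos _ hzm (perp_symm A hazpos hazpos' hperp)
      (by rw [hsub' z]; exact hzp)
  have c2' : A.Perp (((1/2 : ℝ) : ℂ) • (A.abs k k z' + z'))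
      (((1/2 : ℝ) : ℂ) • (A.abs k k z - z)) := by
    apply perp_symm A hzm hzp'
    exact A.absorb k _ hzm _ hazpos' _ hzp' (perp_symm A hazpos' hzm c2)
      (by rw [hsub z']; exact hzm')
  -- assemble
  have d1 : A.Perp (((1/2 : ℝ) : ℂ) • (A.abs k k z + z))
      (((1/2 : ℝ) : ℂ) • (A.abs k k z - z) + ((1/2 : ℝ) : ℂ) • (A.abs k k z' - z')) :=
    perp_add A hzp hzm hzm' (perp_posP_negP A hz) c1'
  have d2 : A.Perp (((1/2 : ℝ) : ℂ) • (A.abs k k z' + z'))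
      (((1/2 : ℝ) : ℂ) • (A.abs k k z - z) + ((1/2 : ℝ) : ℂ) • (A.abs k k z' - z')) := by
    refine perp_add A hzp' hzm hzm' c2' (perp_posP_negP A hz')
  have hBpos := A.pos_add k _ hzm _ hzm'
  have d3 : A.Perp (((1/2 : ℝ) : ℂ) • (A.abs k k z - z) + ((1/2 : ℝ) : ℂ) • (A.abs k k z' - z'))
      (((1/2 : ℝ) : ℂ) • (A.abs k k z + z) + ((1/2 : ℝ) : ℂ) • (A.abs k k z' + z')) :=
    perp_add A hBpos hzp hzp' (perp_symm A hzp hBpos d1) (perp_symm A hzp' hBpos d2)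
  have d4 := perp_symm A hBpos (A.pos_add k _ hzp _ hzp') d3
  unfold AMOUS.Perp at d4
  have e1 : (((1/2 : ℝ) : ℂ) • (A.abs k k z + z) + ((1/2 : ℝ) : ℂ) • (A.abs k k z' + z'))
      - (((1/2 : ℝ) : ℂ) • (A.abs k k z - z) + ((1/2 : ℝ) : ℂ) • (A.abs k k z' - z'))
      = z + z' := by push_cast; module
  have e2 : (((1/2 : ℝ) : ℂ) • (A.abs k k z + z) + ((1/2 : ℝ) : ℂ) • (A.abs k k z' + z'))
      + (((1/2 : ℝ) : ℂ) • (A.abs k k z - z) + ((1/2 : ℝ) : ℂ) • (A.abs k k z' - z'))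
      = A.abs k k z + A.abs k k z' := by push_cast; module
  rw [e1, e2] at d4
  exact d4

/-! #### Transport along permutations of indices -/

end WithA2

/-- Reindexing a rectangular matrix over `V` along equivalences. -/
def mov {a b a' b' : ℕ} (σ : Fin a ≃ Fin a') (τ : Fin b ≃ Fin b')
    (z : Matrix (Fin a) (Fin b) V) : Matrix (Fin a') (Fin b') V :=
  fun i j => z (σ.symm i) (τ.symm j)

theorem mov_eq {a b a' b' : ℕ} (σ : Fin a ≃ Fin a') (τ : Fin b ≃ Fin b')
    (z : Matrix (Fin a) (Fin b) V) :
    mov σ τ z = aSmul (PmE σ.symm) (smulB z (PmE τ)) := by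
  funext i j
  simp [mov, aSmul_PmE, smulB_PmE]
  exact (congrFun (congrFun (aSmul_PmE σ.symm (fun i j => z i (τ.symm j))) i) j).symm

theorem mstar_mov {a b a' b' : ℕ} (σ : Fin a ≃ Fin a') (τ : Fin b ≃ Fin b')
    (z : Matrix (Fin a) (Fin b) V) : mstar (mov σ τ z) = mov τ σ (mstar z) := by
  funext i j
  simp [mov, mstar]

theorem mov_sub {a b a' b' : ℕ} (σ : Fin a ≃ Fin a') (τ : Fin b ≃ Fin b')
    (z w : Matrix (Fin a) (Fin b) V) : mov σ τ (z - w) = mov σ τ z - mov σ τ w := by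
  funext i j
  simp [mov]

theorem mov_csmul {a b a' b' : ℕ} (σ : Fin a ≃ Fin a') (τ : Fin b ≃ Fin b') (c : ℂ)
    (z : Matrix (Fin a) (Fin b) V) : mov σ τ (c • z) = c • mov σ τ z := by
  funext i j
  simp [mov]

section WithA3

variable (A : AMOUS V)

theorem abs_mov {a b a' b' : ℕ} (σ : Fin a ≃ Fin a') (τ : Fin b ≃ Fin b')
    (z : Matrix (Fin a) (Fin b) V) :
    A.abs a' b' (mov σ τ z) = mov τ τ (A.abs a b z) := by
  rw [mov_eq, absRuleL A (PmE σ.symm) (PmE_unitary_left σ.symm),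
    absRU A z (PmE τ) (PmE_unitary_left τ) (PmE_unitary_right τ), PmE_conjTranspose,
    ← mov_eq]

theorem pos_mov {a a' : ℕ} (σ : Fin a ≃ Fin a') {u : Matrix (Fin a) (Fin a) V}
    (hu : u ∈ A.pos a) : mov σ σ u ∈ A.pos a' := by
  rw [mov_eq, ← PmE_conjTranspose]
  exact A.pos_conj a' a (PmE σ) u hu

theorem eN_mov {a a' : ℕ} (σ : Fin a ≃ Fin a') : mov σ σ (A.eN a) = A.eN a' := by
  funext i j
  have hiff : (σ.symm i = σ.symm j) ↔ i = j := Equiv.apply_eq_iff_eq _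
  by_cases h : i = j
  · simp [mov, AMOUS.eN, diagE, h]
  · have h2 : ¬ (σ.symm i = σ.symm j) := fun hc => h (hiff.mp hc)
    simp [mov, AMOUS.eN, diagE, h, h2]

theorem IsOP_mov {a a' : ℕ} (σ : Fin a ≃ Fin a') {u : Matrix (Fin a) (Fin a) V}
    (hu : A.IsOP a u) : A.IsOP a' (mov σ σ u) := by
  refine ⟨by rw [mstar_mov, hu.1], ?_⟩
  have h1 : (2 : ℂ) • mov σ σ u - A.eN a' = mov σ σ ((2 : ℂ) • u - A.eN a) := by
    rw [mov_sub, mov_csmul, eN_mov]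
  rw [h1, abs_mov, hu.2, eN_mov]

end WithA3

/-! #### The self-adjoint dilation and additivity on orthogonal elements -/

theorem mstar_zeroV {m n : ℕ} : mstar (0 : Matrix (Fin m) (Fin n) V) = 0 := by
  funext i j; simp [mstar]

theorem mov_refl {a b : ℕ} (z : Matrix (Fin a) (Fin b) V) :
    mov (Equiv.refl (Fin a)) (Equiv.refl (Fin b)) z = z := by
  funext i j; simp [mov]

theorem mov_swap_dsum {a b : ℕ} (u : Matrix (Fin b) (Fin b) V) (v : Matrix (Fin a) (Fin a) V) :
    mov (swapEquiv b a) (swapEquiv b a) (dsum u v) = dsum v u := by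
  funext i j
  have hi := i.isLt
  have hj := j.isLt
  simp only [mov]
  obtain ⟨i', hi'⟩ : ∃ k : Fin (b + a), (swapEquiv b a).symm i = k := ⟨_, rfl⟩
  obtain ⟨j', hj'⟩ : ∃ k : Fin (b + a), (swapEquiv b a).symm j = k := ⟨_, rfl⟩
  have hvi : (i' : ℕ) = if (i : ℕ) < a then (i : ℕ) + b else (i : ℕ) - a := by
    rw [← hi']; rfl
  have hvj : (j' : ℕ) = if (j : ℕ) < a then (j : ℕ) + b else (j : ℕ) - a := by
    rw [← hj']; rfl
  rw [hi', hj']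
  by_cases h1 : (i : ℕ) < a <;> by_cases h2 : (j : ℕ) < a
  · rw [dsum_apply_ll v u h1 h2, dsum_apply_rr u v (by rw [hvi]; split <;> omega)
      (by rw [hvj]; split <;> omega)]
    exact congrArg₂ v (Fin.ext (by simp [hvi, h1])) (Fin.ext (by simp [hvj, h2]))
  · rw [dsum_apply_lr v u h1 h2, dsum_apply_rl u v (by rw [hvi]; split <;> omega)
      (by rw [hvj]; split <;> omega)]
  · rw [dsum_apply_rl v u h1 h2, dsum_apply_lr u v (by rw [hvi]; split <;> omega)
      (by rw [hvj]; split <;> omega)]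
  · rw [dsum_apply_rr v u h1 h2, dsum_apply_ll u v (by rw [hvi]; split <;> omega)
      (by rw [hvj]; split <;> omega)]
    refine congrArg₂ u (Fin.ext ?_) (Fin.ext ?_)
    · simp [hvi, h1]
    · simp [hvj, h2]

/-- The self-adjoint `2 × 2` dilation `[[0, z],[z*, 0]]`. -/
def Mdil {a b : ℕ} (z : Matrix (Fin a) (Fin b) V) : Matrix (Fin (a + b)) (Fin (a + b)) V :=
  smulB (dsum z (mstar z)) (PmE (swapEquiv b a))

theorem Mdil_add {a b : ℕ} (x y : Matrix (Fin a) (Fin b) V) :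
    Mdil (x + y) = Mdil x + Mdil y := by
  unfold Mdil
  rw [mstar_add, ← dsum_add, smulB_add]

theorem mstar_Mdil {a b : ℕ} (z : Matrix (Fin a) (Fin b) V) : mstar (Mdil z) = Mdil z := by
  unfold Mdil
  rw [mstar_smulB, PmE_conjTranspose, mstar_dsum, mstar_mstar]
  rw [aSmul_PmE, smulB_PmE]
  funext i j
  have hi := i.isLt
  have hj := j.isLt
  show dsum (mstar z) z ((swapEquiv b a).symm i) j = dsum z (mstar z) i ((swapEquiv b a).symm j)
  obtain ⟨i', hi'⟩ : ∃ k : Fin (b + a), (swapEquiv b a).symm i = k := ⟨_, rfl⟩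
  obtain ⟨j', hj'⟩ : ∃ k : Fin (b + a), (swapEquiv b a).symm j = k := ⟨_, rfl⟩
  have hvi : (i' : ℕ) = if (i : ℕ) < a then (i : ℕ) + b else (i : ℕ) - a := by
    rw [← hi']; rfl
  have hvj : (j' : ℕ) = if (j : ℕ) < a then (j : ℕ) + b else (j : ℕ) - a := by
    rw [← hj']; rfl
  rw [hi', hj']
  by_cases h1 : (i : ℕ) < a <;> by_cases h2 : (j : ℕ) < a
  · rw [dsum_apply_rl (mstar z) z (by rw [hvi]; split <;> omega) h2,
      dsum_apply_lr z (mstar z) h1 (by rw [hvj]; split <;> omega)]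
  · rw [dsum_apply_rr (mstar z) z (by rw [hvi]; split <;> omega)
      (by omega),
      dsum_apply_ll z (mstar z) h1 (by rw [hvj]; split <;> omega)]
    refine congrArg₂ z (Fin.ext ?_) (Fin.ext ?_) <;> simp [hvi, hvj, h1, h2]
  · rw [dsum_apply_ll (mstar z) z (by rw [hvi]; split <;> omega) h2,
      dsum_apply_rr z (mstar z) h1 (by rw [hvj]; split <;> omega)]
    show star (z _ _) = star (z _ _)
    refine congrArg star (congrArg₂ z (Fin.ext ?_) (Fin.ext ?_)) <;>
      simp [hvi, hvj, h1, h2]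
  · rw [dsum_apply_lr (mstar z) z (by rw [hvi]; split <;> omega) (by omega),
      dsum_apply_rl z (mstar z) h1 (by rw [hvj]; split <;> omega)]

section WithA4

variable (A : AMOUS V)

theorem abs_Mdil {a b : ℕ} (z : Matrix (Fin a) (Fin b) V) :
    A.abs (a + b) (a + b) (Mdil z) = dsum (A.abs b a (mstar z)) (A.abs a b z) := by
  unfold Mdil
  rw [absRU A _ (PmE (swapEquiv b a)) (PmE_unitary_left _) (PmE_unitary_right _),
    PmE_conjTranspose, ← mov_eq, A.abs_dsum, mov_swap_dsum]

theorem perp_dsum {m n : ℕ} {u u' : Matrix (Fin m) (Fin m) V} {v v' : Matrix (Fin n) (Fin n) V}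
    (h1 : A.Perp u u') (h2 : A.Perp v v') : A.Perp (dsum u v) (dsum u' v') := by
  unfold AMOUS.Perp at h1 h2 ⊢
  rw [dsum_sub, A.abs_dsum, h1, h2, dsum_add]

theorem dsum_block2_eq {m n : ℕ} {u u' : Matrix (Fin m) (Fin m) V}
    {v v' : Matrix (Fin n) (Fin n) V} (h : dsum u v = dsum u' v') : v = v' := by
  funext i j
  have h2 := congrFun (congrFun h ⟨m + (i : ℕ), by omega⟩) ⟨m + (j : ℕ), by omega⟩
  rw [dsum_apply_rr u v (by simp) (by simp), dsum_apply_rr u' v' (by simp) (by simp)] at h2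
  simpa using h2

/-- Additivity of the absolute value on orthogonal rectangular elements. -/
theorem Tperp {a b : ℕ} (x y : Matrix (Fin a) (Fin b) V)
    (h1 : A.Perp (A.abs a b x) (A.abs a b y))
    (h2 : A.Perp (A.abs b a (mstar x)) (A.abs b a (mstar y))) :
    A.abs a b (x + y) = A.abs a b x + A.abs a b y := by
  have hperp : A.Perp (A.abs (a+b) (a+b) (Mdil x)) (A.abs (a+b) (a+b) (Mdil y)) := by
    rw [abs_Mdil, abs_Mdil]
    exact perp_dsum A h2 h1
  have hadd := saAdd A (mstar_Mdil x) (mstar_Mdil y) hperp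
  rw [← Mdil_add, abs_Mdil, abs_Mdil, abs_Mdil, dsum_add] at hadd
  exact dsum_block2_eq hadd

end WithA4

/-! #### The stabilized equivalence toolkit -/

/-- Both are order projections and they are partial-isometrically equivalent. -/
def SimE (A : AMOUS V) (x y : OPE V) : Prop := A.IsOPE x ∧ A.IsOPE y ∧ A.Sim x y

section WithA5

variable (A : AMOUS V)

theorem abs_stack0 {c k : ℕ} (u : Matrix (Fin c) (Fin c) V) :
    A.abs (c + k) c (dsum u (0 : Matrix (Fin k) (Fin 0) V)) = A.abs c c u := by
  have h := A.abs_dsum c c k 0 u 0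
  rw [dsum_fin0] at h
  exact h

theorem abs_wide0 {c k : ℕ} (u : Matrix (Fin c) (Fin c) V) :
    A.abs c (c + k) (dsum u (0 : Matrix (Fin 0) (Fin k) V))
      = dsum (A.abs c c u) (0 : Matrix (Fin k) (Fin k) V) := by
  have h := A.abs_dsum c c 0 k u 0
  rw [abs_zeroM] at h
  exact h

theorem SimE_refl {x : OPE V} (hx : A.IsOPE x) : SimE A x x := by
  have habs : A.abs x.1 x.1 x.2 = x.2 := A.abs_of_pos x.1 x.2 (OP_pos A hx)
  have habs' : A.abs x.1 x.1 (mstar x.2) = x.2 := by rw [hx.1, habs]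
  exact ⟨hx, hx, x.2, ⟨by rw [habs]; exact hx, by rw [habs']; exact hx⟩,
    habs'.symm, habs.symm⟩

theorem SimE_symm {x y : OPE V} (h : SimE A x y) : SimE A y x := by
  obtain ⟨hx, hy, v, ⟨hpi1, hpi2⟩, he1, he2⟩ := h
  refine ⟨hy, hx, mstar v, ⟨hpi2, ?_⟩, ?_, he1⟩
  · rw [mstar_mstar]; exact hpi1
  · rw [mstar_mstar]; exact he2

theorem SimE_trans (hT : A.CondT) {x y z : OPE V} (h1 : SimE A x y) (h2 : SimE A y z) :
    SimE A x z := by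
  obtain ⟨hx, hy, u, hpiu, heu1, heu2⟩ := h1
  obtain ⟨_, hz, w, hpiw, hew1, hew2⟩ := h2
  have habs : A.abs x.1 y.1 u = A.abs z.1 y.1 (mstar w) := by rw [← heu2, hew1]
  have hpiw' : A.IsPI (mstar w) := by
    refine ⟨hpiw.2, ?_⟩
    rw [mstar_mstar]
    exact hpiw.1
  obtain ⟨t, hpit, het1, het2⟩ := hT x.1 y.1 z.1 u (mstar w) hpiu hpiw' habs
  refine ⟨hx, hz, t, hpit, ?_, ?_⟩
  · rw [het1, ← heu1]
  · rw [het2, mstar_mstar, ← hew2]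

theorem SimE_dcongr {x y x' y' : OPE V} (h : SimE A x y) (h' : SimE A x' y') :
    SimE A (x.d x') (y.d y') := by
  obtain ⟨hx, hy, v, ⟨hpi1, hpi2⟩, he1, he2⟩ := h
  obtain ⟨hx', hy', w, ⟨hpi1', hpi2'⟩, he1', he2'⟩ := h'
  refine ⟨OP_dsum A hx hx', OP_dsum A hy hy', dsum v w, ⟨?_, ?_⟩, ?_, ?_⟩
  · show A.IsOP (y.1 + y'.1) (A.abs (x.1 + x'.1) (y.1 + y'.1) (dsum v w))
    rw [A.abs_dsum]
    exact OP_dsum A hpi1 hpi1'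
  · show A.IsOP (x.1 + x'.1) (A.abs (y.1 + y'.1) (x.1 + x'.1) (mstar (dsum v w)))
    rw [mstar_dsum, A.abs_dsum]
    exact OP_dsum A hpi2 hpi2'
  · show dsum x.2 x'.2 = A.abs (y.1 + y'.1) (x.1 + x'.1) (mstar (dsum v w))
    rw [mstar_dsum, A.abs_dsum, ← he1, ← he1']
  · show dsum y.2 y'.2 = A.abs (x.1 + x'.1) (y.1 + y'.1) (dsum v w)
    rw [A.abs_dsum, ← he2, ← he2']

theorem SimE_mov {x : OPE V} (hx : A.IsOPE x) {a' : ℕ} (σ : Fin x.1 ≃ Fin a') :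
    SimE A x ⟨a', mov σ σ x.2⟩ := by
  have hmov : A.IsOP a' (mov σ σ x.2) := IsOP_mov A σ hx
  have habsw : A.abs x.1 a' (smulB x.2 (PmE σ)) = mov σ σ x.2 := by
    rw [absRposR A (OP_pos A hx) (PmE σ) (PmE_unitary_left σ) (PmE_unitary_right σ),
      PmE_conjTranspose, ← mov_eq]
  have habsw' : A.abs a' x.1 (mstar (smulB x.2 (PmE σ))) = x.2 := by
    rw [mstar_smulB, PmE_conjTranspose, hx.1, absRuleL A (PmE σ.symm) (PmE_unitary_left σ.symm)]
    exact A.abs_of_pos x.1 x.2 (OP_pos A hx)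
  refine ⟨hx, hmov, smulB x.2 (PmE σ), ⟨?_, ?_⟩, habsw'.symm, habsw.symm⟩
  · rw [habsw]; exact hmov
  · rw [habsw']; exact hx

theorem SimE_zpad {x : OPE V} (hx : A.IsOPE x) (k : ℕ) :
    SimE A (x.d ⟨k, (0 : Matrix (Fin k) (Fin k) V)⟩) x := by
  have hzero : A.IsOP k (0 : Matrix (Fin k) (Fin k) V) := OP_zero A k
  have hdx : A.IsOPE (x.d ⟨k, 0⟩) := OP_dsum A hx hzero
  have habsx : A.abs x.1 x.1 x.2 = x.2 := A.abs_of_pos x.1 x.2 (OP_pos A hx)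
  have hw1 : A.abs (x.1 + k) x.1 (dsum x.2 (0 : Matrix (Fin k) (Fin 0) V)) = x.2 := by
    rw [abs_stack0, habsx]
  have hw2 : A.abs x.1 (x.1 + k) (mstar (dsum x.2 (0 : Matrix (Fin k) (Fin 0) V)))
      = dsum x.2 (0 : Matrix (Fin k) (Fin k) V) := by
    rw [mstar_dsum, hx.1, mstar_zeroV, abs_wide0, habsx]
  refine ⟨hdx, hx, dsum x.2 (0 : Matrix (Fin k) (Fin 0) V), ⟨?_, ?_⟩, hw2.symm, hw1.symm⟩
  · show A.IsOP x.1 (A.abs (x.1 + k) x.1 (dsum x.2 (0 : Matrix (Fin k) (Fin 0) V)))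
    rw [hw1]; exact hx
  · show A.IsOP (x.1 + k) (A.abs x.1 (x.1 + k) (mstar (dsum x.2 (0 : Matrix (Fin k) (Fin 0) V))))
    rw [hw2]; exact hdx

/-- The key lemma: `p ⊕ (eⁿ − p) ∼ eⁿ`. -/
theorem SimE_core {m : ℕ} {p : Matrix (Fin m) (Fin m) V} (hp : A.IsOP m p) :
    SimE A ⟨m + m, dsum p (A.eN m - p)⟩ ⟨m, A.eN m⟩ := by
  have hq : A.IsOP m (A.eN m - p) := OP_compl A hp
  have hqpos : A.eN m - p ∈ A.pos m := OP_pos A hq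
  have hppos : p ∈ A.pos m := OP_pos A hp
  set x : Matrix (Fin (m + m)) (Fin m) V := dsum p (0 : Matrix (Fin m) (Fin 0) V) with hxdef
  set y : Matrix (Fin (m + m)) (Fin m) V :=
    mov (swapEquiv m m) (Equiv.refl (Fin m))
      (dsum (A.eN m - p) (0 : Matrix (Fin m) (Fin 0) V) : Matrix (Fin (m + m)) (Fin m) V)
    with hydef
  have habsx : A.abs (m + m) m x = p := by
    rw [hxdef, abs_stack0, A.abs_of_pos m p hppos]
  have habsxs : A.abs m (m + m) (mstar x) = dsum p (0 : Matrix (Fin m) (Fin m) V) := by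
    rw [hxdef]
    rw [show mstar (dsum p (0 : Matrix (Fin m) (Fin 0) V))
      = dsum (mstar p) (mstar (0 : Matrix (Fin m) (Fin 0) V)) from mstar_dsum _ _,
      hp.1, mstar_zeroV, abs_wide0, A.abs_of_pos m p hppos]
  have habsy : A.abs (m + m) m y = A.eN m - p := by
    rw [hydef, abs_mov, mov_refl, abs_stack0, A.abs_of_pos m _ hqpos]
  have habsys : A.abs m (m + m) (mstar y)
      = dsum (0 : Matrix (Fin m) (Fin m) V) (A.eN m - p) := by
    rw [hydef, mstar_mov]
    rw [show mstar (dsum (A.eN m - p) (0 : Matrix (Fin m) (Fin 0) V))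
      = dsum (mstar (A.eN m - p)) (mstar (0 : Matrix (Fin m) (Fin 0) V)) from mstar_dsum _ _,
      hq.1, mstar_zeroV]
    rw [abs_mov, abs_wide0, A.abs_of_pos m _ hqpos, mov_swap_dsum]
  have hperp1 : A.Perp p (A.eN m - p) := by
    show A.abs m m (p - (A.eN m - p)) = p + (A.eN m - p)
    rw [show p - (A.eN m - p) = (2 : ℂ) • p - A.eN m by module, hp.2]
    abel
  have hperp2 : A.Perp (dsum p (0 : Matrix (Fin m) (Fin m) V))
      (dsum (0 : Matrix (Fin m) (Fin m) V) (A.eN m - p)) := by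
    show A.abs (m + m) (m + m) _ = _
    rw [dsum_sub, sub_zero, zero_sub, A.abs_dsum, A.abs_of_pos m p hppos]
    rw [show -(A.eN m - p) = ((-1 : ℝ) : ℂ) • (A.eN m - p) by push_cast; module]
    rw [A.abs_real_smul m (-1) _ (by rw [mstar_sub, mstar_eN, hp.1])]
    rw [A.abs_of_pos m _ hqpos, dsum_add, add_zero, zero_add]
    norm_num
  have hv1 : A.abs (m + m) m (x + y) = A.eN m := by
    rw [Tperp A x y (by rw [habsx, habsy]; exact hperp1)
      (by rw [habsxs, habsys]; exact hperp2), habsx, habsy]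
    abel
  have hv2 : A.abs m (m + m) (mstar (x + y)) = dsum p (A.eN m - p) := by
    rw [mstar_add]
    rw [Tperp A (mstar x) (mstar y) (by rw [habsxs, habsys]; exact hperp2)
      (by rw [mstar_mstar, mstar_mstar, habsx, habsy]; exact hperp1)]
    rw [habsxs, habsys, dsum_add, add_zero, zero_add]
  refine ⟨OP_dsum A hp hq, OP_eN A m, x + y, ⟨?_, ?_⟩, hv2.symm, hv1.symm⟩
  · rw [hv1]; exact OP_eN A m
  · rw [hv2]; exact OP_dsum A hp hq

end WithA5

/-! #### Associativity, swapping, `e`-splitting -/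

theorem mov_assoc {a b c : ℕ} (x : Matrix (Fin a) (Fin a) V) (y : Matrix (Fin b) (Fin b) V)
    (w : Matrix (Fin c) (Fin c) V) :
    mov (finCongr (Nat.add_assoc a b c)) (finCongr (Nat.add_assoc a b c)) (dsum (dsum x y) w)
      = dsum x (dsum y w) := by
  funext i j
  have hi := i.isLt
  have hj := j.isLt
  show dsum (dsum x y) w ((finCongr (Nat.add_assoc a b c)).symm i)
      ((finCongr (Nat.add_assoc a b c)).symm j) = dsum x (dsum y w) i j
  have hvi : (((finCongr (Nat.add_assoc a b c)).symm i : Fin (a + b + c)) : ℕ) = (i : ℕ) := rfl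
  have hvj : (((finCongr (Nat.add_assoc a b c)).symm j : Fin (a + b + c)) : ℕ) = (j : ℕ) := rfl
  simp only [dsum, hvi, hvj, Fin.val_mk, Nat.sub_sub]
  split_ifs <;> first | rfl | omega | (exfalso; omega)

section WithA6

variable (A : AMOUS V)

theorem SimE_assoc {a b c : OPE V} (ha : A.IsOPE a) (hb : A.IsOPE b) (hc : A.IsOPE c) :
    SimE A ((a.d b).d c) (a.d (b.d c)) := by
  have h := SimE_mov A (x := (a.d b).d c) (OP_dsum A (OP_dsum A ha hb) hc)
    (finCongr (Nat.add_assoc a.1 b.1 c.1))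
  have key : (⟨a.1 + (b.1 + c.1), mov (finCongr (Nat.add_assoc a.1 b.1 c.1))
      (finCongr (Nat.add_assoc a.1 b.1 c.1)) (((a.d b).d c).2)⟩ : OPE V) = a.d (b.d c) := by
    show _ = (⟨a.1 + (b.1 + c.1), dsum a.2 (dsum b.2 c.2)⟩ : OPE V)
    exact congrArg (fun M => (⟨a.1 + (b.1 + c.1), M⟩ : OPE V)) (mov_assoc a.2 b.2 c.2)
  exact key ▸ h

theorem SimE_swap {a b : OPE V} (ha : A.IsOPE a) (hb : A.IsOPE b) :
    SimE A (a.d b) (b.d a) := by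
  have h := SimE_mov A (x := a.d b) (OP_dsum A ha hb) (swapEquiv a.1 b.1)
  have key : (⟨b.1 + a.1, mov (swapEquiv a.1 b.1) (swapEquiv a.1 b.1) ((a.d b).2)⟩ : OPE V)
      = b.d a := by
    show _ = (⟨b.1 + a.1, dsum b.2 a.2⟩ : OPE V)
    exact congrArg (fun M => (⟨b.1 + a.1, M⟩ : OPE V)) (mov_swap_dsum a.2 b.2)
  exact key ▸ h

theorem eOPE_add (m l : ℕ) : (A.eOPE m).d (A.eOPE l) = A.eOPE (m + l) := by
  show (⟨m + l, dsum (A.eN m) (A.eN l)⟩ : OPE V) = ⟨m + l, A.eN (m + l)⟩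
  exact congrArg (fun M => (⟨m + l, M⟩ : OPE V)) (diagE_dsum A.e m l).symm

end WithA6

end S16


open S16

/-- If every `eⁿ` is finite, `[(e, 0)]` is a distinguished order unit
for `(K₀(V), K₀(V)⁺)`: for every `g ∈ K₀(V)` there is `n` with
`−n[(e,0)] ≤ g ≤ n[(e,0)]`. -/
theorem statement16 {V : Type*} [AddCommGroup V] [Module ℂ V] [StarAddMonoid V] [StarModule ℂ V] (A : AMOUS V) (habs : A.IsAbsolute) (hT : A.CondT)
    (hfin : ∀ n : ℕ, A.FiniteOP n (A.eN n)) :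
    ∀ x : OPE V × OPE V, A.IsOPPair x → ∃ n : ℕ,
      A.Kle ((OPE.zero V, A.eOPE n) : OPE V × OPE V) x ∧
        A.Kle x ((A.eOPE n, OPE.zero V) : OPE V × OPE V) := by
  rintro ⟨⟨m, p⟩, l, q⟩ ⟨hp, hq⟩
  have hz : A.IsOPE (OPE.zero V) := OP_zero A 1
  have hpc : A.IsOPE (⟨m, A.eN m - p⟩ : OPE V) := OP_compl A hp
  have hqc : A.IsOPE (⟨l, A.eN l - q⟩ : OPE V) := OP_compl A hq
  have hem : A.IsOPE (A.eOPE m) := OP_eN A m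
  have hel : A.IsOPE (A.eOPE l) := OP_eN A l
  have heml : A.IsOPE (A.eOPE (m + l)) := OP_eN A (m + l)
  refine ⟨m + l, ?_, ?_⟩
  · -- lower bound
    have hemqc : A.IsOPE (OPE.d (A.eOPE m) (⟨l, A.eN l - q⟩ : OPE V)) := OP_dsum A hem hqc
    have hr : A.IsOPE (OPE.d (⟨m, p⟩ : OPE V) (OPE.d (A.eOPE m) (⟨l, A.eN l - q⟩ : OPE V))) :=
      OP_dsum A hp hemqc
    refine ⟨OPE.d (⟨m, p⟩ : OPE V) (OPE.d (A.eOPE m) (⟨l, A.eN l - q⟩ : OPE V)), hr, ?_⟩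
    show A.ASim (OPE.d (OPE.d (OPE.zero V) (OPE.d (⟨m, p⟩ : OPE V)
        (OPE.d (A.eOPE m) (⟨l, A.eN l - q⟩ : OPE V)))) (⟨l, q⟩ : OPE V))
      (OPE.d (⟨m, p⟩ : OPE V) (OPE.d (A.eOPE (m + l)) (OPE.zero V)))
    have d1 : SimE A (OPE.d (OPE.zero V) (OPE.d (⟨m, p⟩ : OPE V)
        (OPE.d (A.eOPE m) (⟨l, A.eN l - q⟩ : OPE V))))
        (OPE.d (⟨m, p⟩ : OPE V) (OPE.d (A.eOPE m) (⟨l, A.eN l - q⟩ : OPE V))) :=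
      SimE_trans A hT (SimE_swap A hz hr) (SimE_zpad A hr 1)
    have d2 := SimE_dcongr A d1 (SimE_refl A hq)
    have d3 := SimE_assoc A hp hemqc hq
    have d4 := SimE_assoc A hem hqc hq
    have d5 : SimE A (OPE.d (⟨l, A.eN l - q⟩ : OPE V) (⟨l, q⟩ : OPE V)) (A.eOPE l) :=
      SimE_trans A hT (SimE_swap A hqc hq) (SimE_core A hq)
    have d6 := SimE_dcongr A (SimE_refl A hem) d5
    rw [eOPE_add A m l] at d6
    have d7 := SimE_dcongr A (SimE_refl A hp) (SimE_trans A hT d4 d6)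
    have d8 := SimE_dcongr A (SimE_refl A hp) (SimE_zpad A heml 1)
    have chainL := SimE_trans A hT d2 (SimE_trans A hT d3
      (SimE_trans A hT d7 (SimE_symm A d8)))
    exact ⟨OPE.zero V, OP_zero A 1, (SimE_dcongr A chainL (SimE_refl A hz)).2.2⟩
  · -- upper bound
    have hxqel : A.IsOPE (OPE.d (⟨l, q⟩ : OPE V) (A.eOPE l)) := OP_dsum A hq hel
    have hr : A.IsOPE (OPE.d (⟨m, A.eN m - p⟩ : OPE V) (OPE.d (⟨l, q⟩ : OPE V) (A.eOPE l))) :=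
      OP_dsum A hpc hxqel
    refine ⟨OPE.d (⟨m, A.eN m - p⟩ : OPE V) (OPE.d (⟨l, q⟩ : OPE V) (A.eOPE l)), hr, ?_⟩
    show A.ASim (OPE.d (OPE.d (⟨m, p⟩ : OPE V) (OPE.d (⟨m, A.eN m - p⟩ : OPE V)
        (OPE.d (⟨l, q⟩ : OPE V) (A.eOPE l)))) (OPE.zero V))
      (OPE.d (A.eOPE (m + l)) (OPE.d (⟨l, q⟩ : OPE V) (OPE.zero V)))
    have hxpr : A.IsOPE (OPE.d (⟨m, p⟩ : OPE V) (OPE.d (⟨m, A.eN m - p⟩ : OPE V)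
        (OPE.d (⟨l, q⟩ : OPE V) (A.eOPE l)))) := OP_dsum A hp hr
    have c1 := SimE_zpad A hxpr 1
    have c2 := SimE_symm A (SimE_assoc A hp hpc hxqel)
    have c3 := SimE_dcongr A (SimE_core A hp) (SimE_refl A hxqel)
    have c4 := SimE_dcongr A (SimE_refl A hem) (SimE_swap A hq hel)
    have c5 := SimE_symm A (SimE_assoc A hem hel hq)
    rw [eOPE_add A m l] at c5
    have c7 := SimE_dcongr A (SimE_refl A heml) (SimE_zpad A hq 1)
    have chainU := SimE_trans A hT c1 (SimE_trans A hT c2 (SimE_trans A hT c3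
      (SimE_trans A hT c4 (SimE_trans A hT c5 (SimE_symm A c7)))))
    exact ⟨OPE.zero V, OP_zero A 1, (SimE_dcongr A chainU (SimE_refl A hz)).2.2⟩
end
end
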